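/- arXiv:2303.05931 — 6 statements merged into one kernel-verified Lean document; each statement's English description precedes it below -/
import Mathlib

section
/- Let R be a commutative ring with identity which is not isomorphic to a direct product of two fields (so that the prime ideal sum graph PIS(R) is connected). Then the metric dimension of PIS(R) is finite if and only if R has only finitely many ideals. -/
open scoped Classical

/-- The vertex set of the prime ideal sum graph: nonzero proper ideals of `R`. -/
abbrev PISVertex (R : Type*) [CommRing R] := {I : Ideal R // I ≠ ⊥ ∧ I ≠ ⊤}

/-- The prime ideal sum graph of a commutative ring `R`: vertices are nonzero proper
ideals, and two distinct vertices `I`, `J` are adjacent iff `I + J` is a prime ideal. -/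
def PIS (R : Type*) [CommRing R] : SimpleGraph (PISVertex R) where
  Adj I J := I ≠ J ∧ (I.1 + J.1).IsPrime
  symm := ⟨fun I J h => ⟨h.1.symm, by rw [add_comm]; exact h.2⟩⟩
  loopless := ⟨fun I h => h.1 rfl⟩

/-- A set `S` of vertices is a resolving set if any two distinct vertices not both in `S`
are distinguished by the distance to some vertex of `S`. -/
def IsResolvingSet {V : Type*} (G : SimpleGraph V) (S : Set V) : Prop :=
  ∀ u v : V, u ≠ v → ¬(u ∈ S ∧ v ∈ S) → ∃ w ∈ S, G.dist u w ≠ G.dist v w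

/-- The metric dimension of a graph: the least cardinality of a resolving set. -/
noncomputable def metricDim {V : Type*} (G : SimpleGraph V) : ℕ∞ :=
  ⨅ S : {S : Set V // IsResolvingSet G S}, (S : Set V).encard

universe u

section Aux

variable {R : Type u} [CommRing R]

/-- A maximal ideal containing a vertex is a vertex. -/
lemma maxVertex_mem (x : PISVertex R) {m : Ideal R} (hm : m.IsMaximal) (hle : x.1 ≤ m) :
    m ≠ ⊥ ∧ m ≠ ⊤ :=
  ⟨fun hb => x.2.1 (le_bot_iff.mp (hb ▸ hle)), hm.ne_top⟩

lemma walk_to_max (x : PISVertex R) {m : Ideal R} (hm : m.IsMaximal) (hle : x.1 ≤ m) :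
    ∃ w : (PIS R).Walk x ⟨m, maxVertex_mem x hm hle⟩, w.length ≤ 1 := by
  by_cases he : x = (⟨m, maxVertex_mem x hm hle⟩ : PISVertex R)
  · exact ⟨(SimpleGraph.Walk.nil : (PIS R).Walk x x).copy rfl he, by simp⟩
  · refine ⟨SimpleGraph.Walk.cons (show (PIS R).Adj x _ from ⟨he, ?_⟩) SimpleGraph.Walk.nil, by simp⟩
    rw [Submodule.add_eq_sup, sup_eq_right.mpr hle]
    exact hm.isPrime

lemma walk_max_max
    (h : ¬ ∃ (F₁ F₂ : Type u) (_ : Field F₁) (_ : Field F₂), Nonempty (R ≃+* (F₁ × F₂)))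
    (M₁ M₂ : PISVertex R) (h₁ : M₁.1.IsMaximal) (h₂ : M₂.1.IsMaximal) :
    ∃ w : (PIS R).Walk M₁ M₂, w.length ≤ 2 := by
  by_cases he : M₁ = M₂
  · subst he; exact ⟨SimpleGraph.Walk.nil, by simp⟩
  have hne : M₁.1 ≠ M₂.1 := fun hh => he (Subtype.ext hh)
  have hKbot : M₁.1 ⊓ M₂.1 ≠ ⊥ := by
    intro hb
    apply h
    haveI := h₁; haveI := h₂
    have hcop : IsCoprime M₁.1 M₂.1 :=
      Ideal.isCoprime_iff_sup_eq.mpr (h₁.coprime_of_ne h₂ hne)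
    refine ⟨R ⧸ M₁.1, R ⧸ M₂.1, Ideal.Quotient.field M₁.1, Ideal.Quotient.field M₂.1, ⟨?_⟩⟩
    exact ((RingEquiv.quotientBot R).symm.trans (Ideal.quotEquivOfEq hb.symm)).trans
      (Ideal.quotientInfEquivQuotientProd M₁.1 M₂.1 hcop)
  have hKtop : M₁.1 ⊓ M₂.1 ≠ ⊤ := by
    intro ht
    exact M₁.2.2 (top_le_iff.mp (le_trans ht.ge inf_le_left))
  have hKne1 : (⟨M₁.1 ⊓ M₂.1, hKbot, hKtop⟩ : PISVertex R) ≠ M₁ := by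
    intro hh
    have hv : M₁.1 ⊓ M₂.1 = M₁.1 := congrArg Subtype.val hh
    have : M₁.1 ≤ M₂.1 := by rw [← hv]; exact inf_le_right
    exact hne (h₁.eq_of_le M₂.2.2 this)
  have hKne2 : (⟨M₁.1 ⊓ M₂.1, hKbot, hKtop⟩ : PISVertex R) ≠ M₂ := by
    intro hh
    have hv : M₁.1 ⊓ M₂.1 = M₂.1 := congrArg Subtype.val hh
    have : M₂.1 ≤ M₁.1 := by rw [← hv]; exact inf_le_left
    exact hne (h₂.eq_of_le M₁.2.2 this).symm
  have a1 : (PIS R).Adj M₁ ⟨M₁.1 ⊓ M₂.1, hKbot, hKtop⟩ := by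
    refine ⟨hKne1.symm, ?_⟩
    rw [Submodule.add_eq_sup, sup_eq_left.mpr inf_le_left]
    exact h₁.isPrime
  have a2 : (PIS R).Adj (⟨M₁.1 ⊓ M₂.1, hKbot, hKtop⟩ : PISVertex R) M₂ := by
    refine ⟨hKne2, ?_⟩
    rw [Submodule.add_eq_sup, sup_eq_right.mpr inf_le_right]
    exact h₂.isPrime
  exact ⟨SimpleGraph.Walk.cons a1 (SimpleGraph.Walk.cons a2 SimpleGraph.Walk.nil), by simp⟩

lemma pis_dist_le
    (h : ¬ ∃ (F₁ F₂ : Type u) (_ : Field F₁) (_ : Field F₂), Nonempty (R ≃+* (F₁ × F₂)))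
    (x y : PISVertex R) : (PIS R).dist x y ≤ 4 := by
  obtain ⟨m₁, hm₁, hle₁⟩ := Ideal.exists_le_maximal x.1 x.2.2
  obtain ⟨m₂, hm₂, hle₂⟩ := Ideal.exists_le_maximal y.1 y.2.2
  obtain ⟨w₁, hw₁⟩ := walk_to_max x hm₁ hle₁
  obtain ⟨w₃, hw₃⟩ := walk_to_max y hm₂ hle₂
  obtain ⟨w₂, hw₂⟩ := walk_max_max h (⟨m₁, maxVertex_mem x hm₁ hle₁⟩ : PISVertex R)
    ⟨m₂, maxVertex_mem y hm₂ hle₂⟩ hm₁ hm₂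
  calc (PIS R).dist x y ≤ (w₁.append (w₂.append w₃.reverse)).length :=
        SimpleGraph.dist_le _
    _ = w₁.length + (w₂.length + w₃.length) := by
        simp [SimpleGraph.Walk.length_append, SimpleGraph.Walk.length_reverse]
    _ ≤ 1 + (2 + 1) := by omega
    _ = 4 := by norm_num

end Aux

/-- For a commutative ring `R` not isomorphic to a direct product of two fields,
the metric dimension of `PIS R` is finite iff `R` has only finitely many ideals. -/
theorem metricDim_PIS_finite_iff {R : Type u} [CommRing R]
    (h : ¬ ∃ (F₁ F₂ : Type u) (_ : Field F₁) (_ : Field F₂), Nonempty (R ≃+* (F₁ × F₂))) :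
    metricDim (PIS R) ≠ ⊤ ↔ Finite (Ideal R) := by
  constructor
  · intro hne
    simp only [metricDim, ne_eq, iInf_eq_top, not_forall] at hne
    obtain ⟨⟨S, hS⟩, hcard⟩ := hne
    have hSfin : S.Finite := by
      rw [← Set.encard_lt_top_iff]
      exact lt_of_le_of_ne le_top hcard
    haveI : Finite S := hSfin.to_subtype
    have hinj : Function.Injective
        (fun (x : ↥Sᶜ) (w : S) => (⟨(PIS R).dist x.1 w.1,
          Nat.lt_succ_of_le (pis_dist_le h x.1 w.1)⟩ : Fin 5)) := by
      intro a b hab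
      by_contra hne'
      have hne'' : a.1 ≠ b.1 := fun hh => hne' (Subtype.ext hh)
      obtain ⟨w, hwS, hd⟩ := hS a.1 b.1 hne'' (fun hh => a.2 hh.1)
      have := congrFun hab ⟨w, hwS⟩
      exact hd (congrArg Fin.val this)
    haveI : Finite ↥Sᶜ := Finite.of_injective _ hinj
    have hcfin : (Sᶜ : Set (PISVertex R)).Finite := Set.finite_coe_iff.mp this
    have huniv : (Set.univ : Set (PISVertex R)).Finite := by
      rw [← Set.union_compl_self S]
      exact hSfin.union hcfin
    haveI : Finite (PISVertex R) := Set.finite_univ_iff.mp huniv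
    have ginj : Function.Injective (fun I : Ideal R =>
        if h1 : I = ⊥ then (Sum.inr true : PISVertex R ⊕ Bool)
        else if h2 : I = ⊤ then Sum.inr false
        else Sum.inl ⟨I, h1, h2⟩) := by
      intro I J hIJ
      simp only at hIJ
      split_ifs at hIJ <;>
        first
          | simp_all
          | exact congrArg Subtype.val (Sum.inl_injective hIJ)
    exact Finite.of_injective _ ginj
  · intro hfin
    have hres : IsResolvingSet (PIS R) (Set.univ : Set (PISVertex R)) :=
      fun u v _ hmem => absurd ⟨trivial, trivial⟩ hmem
    have hle : metricDim (PIS R) ≤ (Set.univ : Set (PISVertex R)).encard :=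
      iInf_le _ (⟨Set.univ, hres⟩ : {S : Set (PISVertex R) // IsResolvingSet (PIS R) S})
    haveI := hfin
    haveI : Finite (PISVertex R) := Subtype.finite
    exact ne_top_of_le_ne_top (Set.toFinite _).encard_lt_top.ne hle
end

section
/- Let R ≅ F₁ × F₂ × F₃ be a direct product of three fields. Then the metric dimension of the prime ideal sum graph PIS(R) equals 2. -/
open scoped Classical

attribute [-instance] ValuationRing.instLinearOrderIdealOfDecidableLE

namespace PISAux

open Ideal

lemma ideal_bot_ne_top (K : Type*) [Field K] : (⊥ : Ideal K) ≠ ⊤ := by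
  intro h
  have h1 : (1 : K) ∈ (⊥ : Ideal K) := by rw [h]; trivial
  simpa using h1

variable {F₁ F₂ F₃ : Type*} [Field F₁] [Field F₂] [Field F₃]

/-- `tri a b c` is the ideal `a × b × c` of `F₁ × F₂ × F₃`. -/
def tri (a : Ideal F₁) (b : Ideal F₂) (c : Ideal F₃) : Ideal (F₁ × F₂ × F₃) :=
  Ideal.prod a (Ideal.prod b c)

lemma tri_inj {a a' : Ideal F₁} {b b' : Ideal F₂} {c c' : Ideal F₃} :
    tri a b c = tri a' b' c' ↔ a = a' ∧ b = b' ∧ c = c' := by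
  simp [tri, Ideal.prod_inj]

lemma tri_ne {a a' : Ideal F₁} {b b' : Ideal F₂} {c c' : Ideal F₃}
    (h : ¬(a = a' ∧ b = b' ∧ c = c')) : tri a b c ≠ tri a' b' c' :=
  fun hc => h (tri_inj.mp hc)

lemma prod_sup_prod {A B : Type*} [CommRing A] [CommRing B] (I I' : Ideal A) (J J' : Ideal B) :
    Ideal.prod I J ⊔ Ideal.prod I' J' = Ideal.prod (I ⊔ I') (J ⊔ J') := by
  apply le_antisymm
  · apply sup_le
    · rintro ⟨x, y⟩ ⟨hx, hy⟩
      exact ⟨Ideal.mem_sup_left hx, Ideal.mem_sup_left hy⟩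
    · rintro ⟨x, y⟩ ⟨hx, hy⟩
      exact ⟨Ideal.mem_sup_right hx, Ideal.mem_sup_right hy⟩
  · rintro ⟨x, y⟩ ⟨hx, hy⟩
    rcases Submodule.mem_sup.mp hx with ⟨x₁, hx₁, x₂, hx₂, rfl⟩
    rcases Submodule.mem_sup.mp hy with ⟨y₁, hy₁, y₂, hy₂, rfl⟩
    exact Submodule.mem_sup.mpr ⟨(x₁, y₁), ⟨hx₁, hy₁⟩, (x₂, y₂), ⟨hx₂, hy₂⟩, rfl⟩

lemma tri_sup (a a' : Ideal F₁) (b b' : Ideal F₂) (c c' : Ideal F₃) :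
    tri a b c ⊔ tri a' b' c' = tri (a ⊔ a') (b ⊔ b') (c ⊔ c') := by
  simp [tri, prod_sup_prod]

lemma tri_bot : tri (⊥ : Ideal F₁) (⊥ : Ideal F₂) (⊥ : Ideal F₃) = ⊥ := by
  ext ⟨x, y, z⟩
  simp [tri, Ideal.mem_prod, Prod.ext_iff]

lemma tri_top : tri (⊤ : Ideal F₁) (⊤ : Ideal F₂) (⊤ : Ideal F₃) = ⊤ := by
  simp [tri]

lemma prime_p1 : (tri (⊥ : Ideal F₁) (⊤ : Ideal F₂) (⊤ : Ideal F₃)).IsPrime := by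
  have h : tri (⊥ : Ideal F₁) (⊤ : Ideal F₂) (⊤ : Ideal F₃)
      = Ideal.prod (⊥ : Ideal F₁) (⊤ : Ideal (F₂ × F₃)) := by rw [tri, Ideal.prod_top_top]
  haveI : (⊥ : Ideal F₁).IsPrime := Ideal.bot_prime
  rw [h]; exact Ideal.isPrime_ideal_prod_top

lemma prime_p2 : (tri (⊤ : Ideal F₁) (⊥ : Ideal F₂) (⊤ : Ideal F₃)).IsPrime := by
  haveI : (⊥ : Ideal F₂).IsPrime := Ideal.bot_prime
  haveI : (Ideal.prod (⊥ : Ideal F₂) (⊤ : Ideal F₃)).IsPrime := Ideal.isPrime_ideal_prod_top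
  exact Ideal.isPrime_ideal_prod_top'

lemma prime_p3 : (tri (⊤ : Ideal F₁) (⊤ : Ideal F₂) (⊥ : Ideal F₃)).IsPrime := by
  haveI : (⊥ : Ideal F₃).IsPrime := Ideal.bot_prime
  haveI : (Ideal.prod (⊤ : Ideal F₂) (⊥ : Ideal F₃)).IsPrime := Ideal.isPrime_ideal_prod_top'
  exact Ideal.isPrime_ideal_prod_top'

lemma not_prime_top {A : Type*} [CommRing A] : ¬ (⊤ : Ideal A).IsPrime := fun h => h.ne_top rfl

end PISAux
section Part2

variable {R F₁ F₂ F₃ : Type*} [CommRing R] [Field F₁] [Field F₂] [Field F₃]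
variable (e : R ≃+* (F₁ × F₂ × F₃))

namespace PISAux

lemma comap_comap_symm (J : Ideal (F₁ × F₂ × F₃)) : (J.comap e).comap e.symm = J := by
  ext x; simp only [Ideal.mem_comap, RingEquiv.apply_symm_apply]

lemma comap_symm_comap (I : Ideal R) : (I.comap e.symm).comap e = I := by
  ext x; simp only [Ideal.mem_comap, RingEquiv.symm_apply_apply]

lemma F_inj : Function.Injective (fun J : Ideal (F₁ × F₂ × F₃) => J.comap e) := by
  intro I J h
  have h2 := congrArg (fun K : Ideal R => K.comap e.symm) h
  simpa only [comap_comap_symm] using h2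

lemma F_sup (I J : Ideal (F₁ × F₂ × F₃)) :
    (I ⊔ J).comap e = I.comap e ⊔ J.comap e := by
  simp only [← Ideal.map_symm, Ideal.map_sup]

lemma F_bot : (⊥ : Ideal (F₁ × F₂ × F₃)).comap e = ⊥ := by
  ext x; simp [Ideal.mem_comap]

lemma F_top : (⊤ : Ideal (F₁ × F₂ × F₃)).comap e = ⊤ := by
  ext x; simp [Ideal.mem_comap]

lemma F_prime_iff (J : Ideal (F₁ × F₂ × F₃)) : (J.comap e).IsPrime ↔ J.IsPrime := by
  constructor
  · intro h
    haveI := h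
    have h2 : ((J.comap e).comap e.symm).IsPrime := Ideal.IsPrime.comap _
    rwa [comap_comap_symm] at h2
  · intro h
    haveI := h
    exact Ideal.IsPrime.comap _

/-- The vertex of `PIS R` corresponding to an ideal of the product ring. -/
def vert (J : Ideal (F₁ × F₂ × F₃)) (h1 : J ≠ ⊥) (h2 : J ≠ ⊤) : PISVertex R :=
  ⟨J.comap e, fun h => h1 (F_inj e (h.trans (F_bot e).symm)),
    fun h => h2 (F_inj e (h.trans (F_top e).symm))⟩

lemma vert_ne {X Y : Ideal (F₁ × F₂ × F₃)} {hX1 hX2 hY1 hY2} (h : X ≠ Y) :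
    vert e X hX1 hX2 ≠ vert e Y hY1 hY2 :=
  fun hc => h (F_inj e (congrArg Subtype.val hc))

lemma vert_adj {X Y : Ideal (F₁ × F₂ × F₃)} {hX1 hX2 hY1 hY2} (h : X ≠ Y)
    (hp : (X ⊔ Y).IsPrime) : (PIS R).Adj (vert e X hX1 hX2) (vert e Y hY1 hY2) := by
  refine (⟨vert_ne e h, ?_⟩ : _ ∧ _)
  show ((X.comap e) + (Y.comap e)).IsPrime
  rw [Submodule.add_eq_sup, ← F_sup]
  exact (F_prime_iff e _).mpr hp

lemma vert_not_adj {X Y : Ideal (F₁ × F₂ × F₃)} {hX1 hX2 hY1 hY2}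
    (hp : ¬ (X ⊔ Y).IsPrime) : ¬ (PIS R).Adj (vert e X hX1 hX2) (vert e Y hY1 hY2) := by
  rintro (⟨-, h2⟩ : _ ∧ _)
  apply hp
  rw [← F_prime_iff e, F_sup]
  rwa [Submodule.add_eq_sup] at h2

end PISAux

end Part2
section Part3

variable {R F₁ F₂ F₃ : Type*} [CommRing R] [Field F₁] [Field F₂] [Field F₃]
variable (e : R ≃+* (F₁ × F₂ × F₃))

namespace PISAux

lemma tri_ne_bot_1 {b : Ideal F₂} {c : Ideal F₃} :
    tri (⊤ : Ideal F₁) b c ≠ ⊥ := by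
  rw [← tri_bot]
  exact tri_ne (fun h => ideal_bot_ne_top F₁ h.1.symm)

lemma tri_ne_bot_2 {a : Ideal F₁} {c : Ideal F₃} :
    tri a (⊤ : Ideal F₂) c ≠ ⊥ := by
  rw [← tri_bot]
  exact tri_ne (fun h => ideal_bot_ne_top F₂ h.2.1.symm)

lemma tri_ne_bot_3 {a : Ideal F₁} {b : Ideal F₂} :
    tri a b (⊤ : Ideal F₃) ≠ ⊥ := by
  rw [← tri_bot]
  exact tri_ne (fun h => ideal_bot_ne_top F₃ h.2.2.symm)

lemma tri_ne_top_1 {b : Ideal F₂} {c : Ideal F₃} :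
    tri (⊥ : Ideal F₁) b c ≠ ⊤ := by
  rw [← tri_top]
  exact tri_ne (fun h => ideal_bot_ne_top F₁ h.1)

lemma tri_ne_top_2 {a : Ideal F₁} {c : Ideal F₃} :
    tri a (⊥ : Ideal F₂) c ≠ ⊤ := by
  rw [← tri_top]
  exact tri_ne (fun h => ideal_bot_ne_top F₂ h.2.1)

lemma tri_ne_top_3 {a : Ideal F₁} {b : Ideal F₂} :
    tri a b (⊥ : Ideal F₃) ≠ ⊤ := by
  rw [← tri_top]
  exact tri_ne (fun h => ideal_bot_ne_top F₃ h.2.2)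

/-- The six vertices of `PIS R`. -/
def M1 : PISVertex R := vert e (tri ⊤ ⊥ ⊥) tri_ne_bot_1 tri_ne_top_2
def M2 : PISVertex R := vert e (tri ⊥ ⊤ ⊥) tri_ne_bot_2 tri_ne_top_1
def M3 : PISVertex R := vert e (tri ⊥ ⊥ ⊤) tri_ne_bot_3 tri_ne_top_1
def P1 : PISVertex R := vert e (tri ⊥ ⊤ ⊤) tri_ne_bot_2 tri_ne_top_1
def P2 : PISVertex R := vert e (tri ⊤ ⊥ ⊤) tri_ne_bot_1 tri_ne_top_2
def P3 : PISVertex R := vert e (tri ⊤ ⊤ ⊥) tri_ne_bot_1 tri_ne_top_3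

lemma classify (v : PISVertex R) :
    v = M1 e ∨ v = M2 e ∨ v = M3 e ∨ v = P1 e ∨ v = P2 e ∨ v = P3 e := by
  obtain ⟨I, hb, ht⟩ := v
  have hIJ : (I.comap e.symm).comap e = I := comap_symm_comap e I
  set J : Ideal (F₁ × F₂ × F₃) := I.comap e.symm with hJdef
  have h1 := Ideal.ideal_prod_eq J
  have h2 := Ideal.ideal_prod_eq (Ideal.map (RingHom.snd F₁ (F₂ × F₃)) J)
  set a := Ideal.map (RingHom.fst F₁ (F₂ × F₃)) J with ha
  set b := Ideal.map (RingHom.fst F₂ F₃) (Ideal.map (RingHom.snd F₁ (F₂ × F₃)) J) with hbdef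
  set c := Ideal.map (RingHom.snd F₂ F₃) (Ideal.map (RingHom.snd F₁ (F₂ × F₃)) J) with hc
  have hJ : J = tri a b c := by rw [tri]; rw [h1, h2]
  have key : ∀ (a' : Ideal F₁) (b' : Ideal F₂) (c' : Ideal F₃) (h1' : tri a' b' c' ≠ ⊥)
      (h2' : tri a' b' c' ≠ ⊤), a = a' → b = b' → c = c' →
      (⟨I, hb, ht⟩ : PISVertex R) = vert e (tri a' b' c') h1' h2' := by
    intro a' b' c' h1' h2' ea eb ec
    apply Subtype.ext
    show I = (tri a' b' c').comap e
    rw [← ea, ← eb, ← ec, ← hJ, hJdef, comap_symm_comap]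
  rcases Ideal.eq_bot_or_top a with ha' | ha' <;>
    rcases Ideal.eq_bot_or_top b with hb' | hb' <;>
      rcases Ideal.eq_bot_or_top c with hc' | hc'
  · exfalso
    apply hb
    rw [← hIJ, hJ, ha', hb', hc', tri_bot, F_bot]
  · exact Or.inr (Or.inr (Or.inl (key _ _ _ _ _ ha' hb' hc')))
  · exact Or.inr (Or.inl (key _ _ _ _ _ ha' hb' hc'))
  · exact Or.inr (Or.inr (Or.inr (Or.inl (key _ _ _ _ _ ha' hb' hc'))))
  · exact Or.inl (key _ _ _ _ _ ha' hb' hc')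
  · exact Or.inr (Or.inr (Or.inr (Or.inr (Or.inl (key _ _ _ _ _ ha' hb' hc')))))
  · exact Or.inr (Or.inr (Or.inr (Or.inr (Or.inr (key _ _ _ _ _ ha' hb' hc')))))
  · exfalso
    apply ht
    rw [← hIJ, hJ, ha', hb', hc', tri_top, F_top]

end PISAux

end Part3
section Part4

namespace PISAux

@[simp] lemma bot_eq_top_iff_ideal (K : Type*) [Field K] : ((⊥ : Ideal K) = ⊤) ↔ False :=
  iff_false_intro (ideal_bot_ne_top K)

@[simp] lemma top_eq_bot_iff_ideal (K : Type*) [Field K] : ((⊤ : Ideal K) = ⊥) ↔ False :=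
  iff_false_intro (Ne.symm (ideal_bot_ne_top K))

lemma dist2 {V : Type*} {G : SimpleGraph V} {u v w : V} (huv : u ≠ v)
    (hna : ¬ G.Adj u v) (h1 : G.Adj u w) (h2 : G.Adj w v) : G.dist u v = 2 := by
  let hw : G.Walk u v := SimpleGraph.Walk.cons h1 (SimpleGraph.Walk.cons h2 SimpleGraph.Walk.nil)
  have hle : G.dist u v ≤ 2 := by
    simpa [hw] using SimpleGraph.dist_le hw
  have h0 : 0 < G.dist u v := SimpleGraph.Reachable.pos_dist_of_ne ⟨hw⟩ huv
  have hne1 : G.dist u v ≠ 1 := fun h => hna (SimpleGraph.dist_eq_one_iff_adj.mp h)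
  omega

variable {R F₁ F₂ F₃ : Type*} [CommRing R] [Field F₁] [Field F₂] [Field F₃]
variable (e : R ≃+* (F₁ × F₂ × F₃))

lemma adj_M1_M2 : (PIS R).Adj (M1 e) (M2 e) :=
  vert_adj e (tri_ne (by simp))
    (by rw [tri_sup]; simp only [sup_bot_eq, bot_sup_eq, sup_idem, sup_top_eq, top_sup_eq]
        exact prime_p3)

lemma adj_M1_M3 : (PIS R).Adj (M1 e) (M3 e) :=
  vert_adj e (tri_ne (by simp))
    (by rw [tri_sup]; simp only [sup_bot_eq, bot_sup_eq, sup_idem, sup_top_eq, top_sup_eq]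
        exact prime_p2)

lemma adj_M2_M3 : (PIS R).Adj (M2 e) (M3 e) :=
  vert_adj e (tri_ne (by simp))
    (by rw [tri_sup]; simp only [sup_bot_eq, bot_sup_eq, sup_idem, sup_top_eq, top_sup_eq]
        exact prime_p1)

lemma adj_M2_P1 : (PIS R).Adj (M2 e) (P1 e) :=
  vert_adj e (tri_ne (by simp))
    (by rw [tri_sup]; simp only [sup_bot_eq, bot_sup_eq, sup_idem, sup_top_eq, top_sup_eq]
        exact prime_p1)

lemma adj_M3_P1 : (PIS R).Adj (M3 e) (P1 e) :=
  vert_adj e (tri_ne (by simp))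
    (by rw [tri_sup]; simp only [sup_bot_eq, bot_sup_eq, sup_idem, sup_top_eq, top_sup_eq]
        exact prime_p1)

lemma adj_M1_P2 : (PIS R).Adj (M1 e) (P2 e) :=
  vert_adj e (tri_ne (by simp))
    (by rw [tri_sup]; simp only [sup_bot_eq, bot_sup_eq, sup_idem, sup_top_eq, top_sup_eq]
        exact prime_p2)

lemma adj_M3_P2 : (PIS R).Adj (M3 e) (P2 e) :=
  vert_adj e (tri_ne (by simp))
    (by rw [tri_sup]; simp only [sup_bot_eq, bot_sup_eq, sup_idem, sup_top_eq, top_sup_eq]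
        exact prime_p2)

lemma adj_M1_P3 : (PIS R).Adj (M1 e) (P3 e) :=
  vert_adj e (tri_ne (by simp))
    (by rw [tri_sup]; simp only [sup_bot_eq, bot_sup_eq, sup_idem, sup_top_eq, top_sup_eq]
        exact prime_p3)

lemma adj_M2_P3 : (PIS R).Adj (M2 e) (P3 e) :=
  vert_adj e (tri_ne (by simp))
    (by rw [tri_sup]; simp only [sup_bot_eq, bot_sup_eq, sup_idem, sup_top_eq, top_sup_eq]
        exact prime_p3)

lemma nadj_M3_P3 : ¬ (PIS R).Adj (M3 e) (P3 e) :=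
  vert_not_adj e
    (by rw [tri_sup]; simp only [sup_bot_eq, bot_sup_eq, sup_idem, sup_top_eq, top_sup_eq]
        rw [tri_top]; exact not_prime_top)

lemma nadj_P1_P3 : ¬ (PIS R).Adj (P1 e) (P3 e) :=
  vert_not_adj e
    (by rw [tri_sup]; simp only [sup_bot_eq, bot_sup_eq, sup_idem, sup_top_eq, top_sup_eq]
        rw [tri_top]; exact not_prime_top)

lemma nadj_P2_P3 : ¬ (PIS R).Adj (P2 e) (P3 e) :=
  vert_not_adj e
    (by rw [tri_sup]; simp only [sup_bot_eq, bot_sup_eq, sup_idem, sup_top_eq, top_sup_eq]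
        rw [tri_top]; exact not_prime_top)

lemma nadj_M2_P2 : ¬ (PIS R).Adj (M2 e) (P2 e) :=
  vert_not_adj e
    (by rw [tri_sup]; simp only [sup_bot_eq, bot_sup_eq, sup_idem, sup_top_eq, top_sup_eq]
        rw [tri_top]; exact not_prime_top)

lemma nadj_P1_P2 : ¬ (PIS R).Adj (P1 e) (P2 e) :=
  vert_not_adj e
    (by rw [tri_sup]; simp only [sup_bot_eq, bot_sup_eq, sup_idem, sup_top_eq, top_sup_eq]
        rw [tri_top]; exact not_prime_top)

end PISAux

end Part4

/-- If `R` is isomorphic to a direct product of three fields, then the metric dimension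
of its prime ideal sum graph equals 2. -/
theorem metricDim_PIS_three_fields {R F₁ F₂ F₃ : Type*} [CommRing R]
    [Field F₁] [Field F₂] [Field F₃] (e : R ≃+* (F₁ × F₂ × F₃)) :
    metricDim (PIS R) = 2 := by
  open PISAux in
  have hW : (P3 e : PISVertex R) ≠ P2 e := vert_ne e (tri_ne (by simp))
  have d1 : (PIS R).dist (M1 e) (P3 e) = 1 :=
    SimpleGraph.dist_eq_one_iff_adj.mpr (adj_M1_P3 e)
  have d2 : (PIS R).dist (M2 e) (P3 e) = 1 :=
    SimpleGraph.dist_eq_one_iff_adj.mpr (adj_M2_P3 e)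
  have d3 : (PIS R).dist (M3 e) (P3 e) = 2 :=
    dist2 (vert_ne e (tri_ne (by simp))) (nadj_M3_P3 e) ((adj_M1_M3 e).symm) (adj_M1_P3 e)
  have d4 : (PIS R).dist (P1 e) (P3 e) = 2 :=
    dist2 (vert_ne e (tri_ne (by simp))) (nadj_P1_P3 e) ((adj_M2_P1 e).symm) (adj_M2_P3 e)
  have d5 : (PIS R).dist (P2 e) (P3 e) = 2 :=
    dist2 hW.symm (nadj_P2_P3 e) ((adj_M1_P2 e).symm) (adj_M1_P3 e)
  have d6 : (PIS R).dist (P3 e) (P3 e) = 0 := SimpleGraph.dist_self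
  have d7 : (PIS R).dist (M1 e) (P2 e) = 1 :=
    SimpleGraph.dist_eq_one_iff_adj.mpr (adj_M1_P2 e)
  have d8 : (PIS R).dist (M2 e) (P2 e) = 2 :=
    dist2 (vert_ne e (tri_ne (by simp))) (nadj_M2_P2 e) ((adj_M1_M2 e).symm) (adj_M1_P2 e)
  have d9 : (PIS R).dist (M3 e) (P2 e) = 1 :=
    SimpleGraph.dist_eq_one_iff_adj.mpr (adj_M3_P2 e)
  have d10 : (PIS R).dist (P1 e) (P2 e) = 2 :=
    dist2 (vert_ne e (tri_ne (by simp))) (nadj_P1_P2 e) ((adj_M3_P1 e).symm) (adj_M3_P2 e)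
  have d11 : (PIS R).dist (P2 e) (P2 e) = 0 := SimpleGraph.dist_self
  have d12 : (PIS R).dist (P3 e) (P2 e) = 2 :=
    dist2 hW (fun h => nadj_P2_P3 e h.symm) ((adj_M1_P3 e).symm) (adj_M1_P2 e)
  have hres : IsResolvingSet (PIS R) {P3 e, P2 e} := by
    intro u v huv _
    have helper : ((PIS R).dist u (P3 e) ≠ (PIS R).dist v (P3 e) ∨
        (PIS R).dist u (P2 e) ≠ (PIS R).dist v (P2 e)) →
        ∃ w ∈ ({P3 e, P2 e} : Set (PISVertex R)), (PIS R).dist u w ≠ (PIS R).dist v w := by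
      rintro (h | h)
      · exact ⟨P3 e, by simp, h⟩
      · exact ⟨P2 e, by simp, h⟩
    rcases classify e u with rfl | rfl | rfl | rfl | rfl | rfl <;>
      rcases classify e v with rfl | rfl | rfl | rfl | rfl | rfl <;>
        first
          | exact absurd rfl huv
          | exact helper (by
              simp only [d1, d2, d3, d4, d5, d6, d7, d8, d9, d10, d11, d12]; decide)
  apply le_antisymm
  · have hle : metricDim (PIS R) ≤ ({P3 e, P2 e} : Set (PISVertex R)).encard :=
      iInf_le _ (⟨_, hres⟩ : {S : Set (PISVertex R) // IsResolvingSet (PIS R) S})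
    rwa [Set.encard_pair hW] at hle
  · refine le_iInf fun ⟨S, hS⟩ => ?_
    show (2 : ℕ∞) ≤ S.encard
    rw [show (2 : ℕ∞) = 1 + 1 from rfl, ENat.add_one_le_iff (by simp),
      Set.one_lt_encard_iff]
    by_contra hns
    have hsub : S.Subsingleton := by
      intro a ha b hb
      by_contra hab
      exact hns ⟨a, b, ha, hb, hab⟩
    rcases hsub.eq_empty_or_singleton with rfl | ⟨w, rfl⟩
    · obtain ⟨w, hw, -⟩ := hS (M1 e) (M2 e) (vert_ne e (tri_ne (by simp))) (by simp)
      exact hw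
    · have key : ∀ u v : PISVertex R, u ≠ v → u ≠ w →
          (PIS R).Adj u w → (PIS R).Adj v w → False := by
        intro u v huv huw hau hav
        obtain ⟨w', hw', hd⟩ := hS u v huv (fun h => huw (Set.mem_singleton_iff.mp h.1))
        rw [Set.mem_singleton_iff] at hw'
        subst hw'
        exact hd (by rw [SimpleGraph.dist_eq_one_iff_adj.mpr hau,
          SimpleGraph.dist_eq_one_iff_adj.mpr hav])
      rcases classify e w with rfl | rfl | rfl | rfl | rfl | rfl
      · exact key (M2 e) (M3 e) (vert_ne e (tri_ne (by simp))) (vert_ne e (tri_ne (by simp)))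
          ((adj_M1_M2 e).symm) ((adj_M1_M3 e).symm)
      · exact key (M1 e) (M3 e) (vert_ne e (tri_ne (by simp))) (vert_ne e (tri_ne (by simp)))
          (adj_M1_M2 e) ((adj_M2_M3 e).symm)
      · exact key (M1 e) (M2 e) (vert_ne e (tri_ne (by simp))) (vert_ne e (tri_ne (by simp)))
          (adj_M1_M3 e) (adj_M2_M3 e)
      · exact key (M2 e) (M3 e) (vert_ne e (tri_ne (by simp))) (vert_ne e (tri_ne (by simp)))
          (adj_M2_P1 e) (adj_M3_P1 e)
      · exact key (M1 e) (M3 e) (vert_ne e (tri_ne (by simp))) (vert_ne e (tri_ne (by simp)))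
          (adj_M1_P2 e) (adj_M3_P2 e)
      · exact key (M1 e) (M2 e) (vert_ne e (tri_ne (by simp))) (vert_ne e (tri_ne (by simp)))
          (adj_M1_P3 e) (adj_M2_P3 e)
end

section
/- Let n ≥ 4 and let R ≅ F₁ × ⋯ × Fₙ be a direct product of n fields. Then the metric dimension of the prime ideal sum graph PIS(R) equals n. -/
open scoped Classical

section PiIdeals

variable {n : ℕ} (F : Fin n → Type*) [∀ i, Field (F i)]

/-- The ideal of the product ring consisting of functions vanishing off `s`. -/
def idealOf (s : Set (Fin n)) : Ideal (∀ i, F i) where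
  carrier := {x | ∀ i ∉ s, x i = 0}
  add_mem' := fun hx hy i hi => by simp [Pi.add_apply, hx i hi, hy i hi]
  zero_mem' := fun i _ => rfl
  smul_mem' := fun c x hx i hi => by simp [smul_eq_mul, Pi.mul_apply, hx i hi]

variable {F}

lemma mem_idealOf {s : Set (Fin n)} {x : ∀ i, F i} :
    x ∈ idealOf F s ↔ ∀ i ∉ s, x i = 0 := Iff.rfl

lemma single_mem_idealOf_iff {s : Set (Fin n)} {i : Fin n} :
    Pi.single i (1 : F i) ∈ idealOf F s ↔ i ∈ s := by
  constructor
  · intro h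
    by_contra hi
    have := h i hi
    rw [Pi.single_eq_same] at this
    exact one_ne_zero this
  · intro hi j hj
    apply Pi.single_eq_of_ne _ 1
    rintro rfl
    exact hj hi

/-- The support of an ideal of a product of fields. -/
def suppI (I : Ideal (∀ i, F i)) : Set (Fin n) := {i | Pi.single i (1 : F i) ∈ I}

lemma idealOf_suppI (I : Ideal (∀ i, F i)) : idealOf F (suppI I) = I := by
  apply le_antisymm
  · intro x hx
    have hrepr : x = ∑ i, Pi.single i (x i) := (Finset.univ_sum_single x).symm
    rw [hrepr]
    refine Ideal.sum_mem _ (fun i _ => ?_)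
    by_cases hi : i ∈ suppI I
    · have : Pi.single i (x i) = Pi.single i (x i) * Pi.single i (1 : F i) := by
        funext j
        by_cases hji : j = i
        · subst hji; simp
        · simp [Pi.single_eq_of_ne hji]
      rw [this]
      exact I.mul_mem_left _ hi
    · have hxi : x i = 0 := hx i hi
      rw [hxi, Pi.single_zero]
      exact I.zero_mem
  · intro x hx i hi
    by_contra hxi
    apply hi
    have : Pi.single i (1 : F i) = Pi.single i ((x i)⁻¹) * x := by
      funext j
      by_cases hji : j = i
      · subst hji; simp [inv_mul_cancel₀ hxi]
      · simp [Pi.single_eq_of_ne hji]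
    show Pi.single i (1 : F i) ∈ I
    rw [this]
    exact I.mul_mem_left _ hx

lemma suppI_idealOf (s : Set (Fin n)) : suppI (idealOf F s) = s := by
  ext i
  exact single_mem_idealOf_iff

lemma idealOf_injective : Function.Injective (idealOf F) := by
  intro s t h
  rw [← suppI_idealOf (F := F) s, ← suppI_idealOf (F := F) t, h]

lemma idealOf_mono {s t : Set (Fin n)} (h : s ⊆ t) : idealOf F s ≤ idealOf F t :=
  fun x hx i hi => hx i (fun hs => hi (h hs))

lemma idealOf_sup (s t : Set (Fin n)) :
    idealOf F s ⊔ idealOf F t = idealOf F (s ∪ t) := by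
  apply le_antisymm
  · exact sup_le (idealOf_mono Set.subset_union_left) (idealOf_mono Set.subset_union_right)
  · intro x hx
    rw [Submodule.mem_sup]
    refine ⟨fun i => if i ∈ s then x i else 0, fun i hi => by simp [hi],
      fun i => if i ∈ s then 0 else x i, fun i hi => ?_, ?_⟩
    · by_cases his : i ∈ s
      · simp [his]
      · simp only [his, if_false]
        exact hx i (fun h => h.elim his hi)
    · funext i
      by_cases his : i ∈ s <;> simp [his]

lemma idealOf_eq_bot_iff {s : Set (Fin n)} : idealOf F s = ⊥ ↔ s = ∅ := by
  constructor
  · intro h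
    by_contra hs
    obtain ⟨i, hi⟩ := Set.nonempty_iff_ne_empty.2 hs
    have hmem : Pi.single i (1 : F i) ∈ idealOf F s := single_mem_idealOf_iff.2 hi
    rw [h, Ideal.mem_bot] at hmem
    have := congrFun hmem i
    rw [Pi.single_eq_same] at this
    exact one_ne_zero this
  · rintro rfl
    rw [eq_bot_iff]
    intro x hx
    rw [Ideal.mem_bot]
    funext i
    exact hx i (Set.notMem_empty i)

lemma idealOf_eq_top_iff {s : Set (Fin n)} : idealOf F s = ⊤ ↔ s = Set.univ := by
  constructor
  · intro h
    by_contra hs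
    obtain ⟨i, hi⟩ : ∃ i, i ∉ s := by
      by_contra hc
      push_neg at hc
      exact hs (Set.eq_univ_of_forall hc)
    have hmem : (1 : ∀ i, F i) ∈ idealOf F s := h ▸ Submodule.mem_top
    exact one_ne_zero (hmem i hi)
  · rintro rfl
    rw [eq_top_iff]
    intro x _ i hi
    exact absurd (Set.mem_univ i) hi

lemma idealOf_isPrime_iff {s : Set (Fin n)} :
    (idealOf F s).IsPrime ↔ ∃ j, s = {j}ᶜ := by
  constructor
  · intro hp
    have hs : s ≠ Set.univ := fun h => hp.ne_top (idealOf_eq_top_iff.2 h)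
    obtain ⟨j, hj⟩ : ∃ j, j ∉ s := by
      by_contra hc
      push_neg at hc
      exact hs (Set.eq_univ_of_forall hc)
    refine ⟨j, le_antisymm (fun i hi => ?_) (fun k hk => ?_)⟩
    · exact fun (h : i ∈ ({j} : Set (Fin n))) => hj (h ▸ hi)
    · -- k ≠ j, show k ∈ s
      have hkj : k ≠ j := hk
      by_contra hks
      have hprod : Pi.single j (1 : F j) * Pi.single k (1 : F k) ∈ idealOf F s := by
        have : Pi.single j (1 : F j) * Pi.single k (1 : F k) = 0 := by
          funext i
          by_cases hij : i = j
          · subst hij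
            simp [Pi.single_eq_of_ne (Ne.symm hkj)]
          · simp [Pi.single_eq_of_ne hij]
        rw [this]
        exact (idealOf F s).zero_mem
      rcases hp.mem_or_mem hprod with h | h
      · exact hj (single_mem_idealOf_iff.1 h)
      · exact hks (single_mem_idealOf_iff.1 h)
  · rintro ⟨j, rfl⟩
    have : idealOf F ({j}ᶜ) = RingHom.ker (Pi.evalRingHom F j) := by
      ext x
      rw [mem_idealOf, RingHom.mem_ker]
      constructor
      · intro h
        exact h j (fun hj => hj rfl)
      · intro h i hi
        have : i = j := by
          by_contra hij
          exact hi hij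
        exact this ▸ h
    rw [this]
    exact RingHom.ker_isPrime _

end PiIdeals

section Transport

variable {R : Type*} [CommRing R] {n : ℕ} {F : Fin n → Type*} [∀ i, Field (F i)]
variable (e : R ≃+* ∀ i, F i)

lemma map_symm_map (I : Ideal R) :
    Ideal.map (e.symm : (∀ i, F i) →+* R) (Ideal.map (e : R →+* ∀ i, F i) I) = I :=
  Ideal.map_of_equiv e

lemma map_map_symm (J : Ideal (∀ i, F i)) :
    Ideal.map (e : R →+* ∀ i, F i) (Ideal.map (e.symm : (∀ i, F i) →+* R) J) = J := by
  have h := Ideal.map_of_equiv (I := J) e.symm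
  rwa [RingEquiv.symm_symm] at h

lemma isPrime_map_iff (I : Ideal R) :
    (Ideal.map (e : R →+* ∀ i, F i) I).IsPrime ↔ I.IsPrime := by
  constructor
  · intro h
    have h2 : ((Ideal.map (e : R →+* ∀ i, F i) I).map (e.symm : (∀ i, F i) →+* R)).IsPrime := by
      rw [Ideal.map_comap_of_equiv e.symm, RingEquiv.symm_symm]
      haveI := h
      exact Ideal.comap_isPrime e _
    rwa [map_symm_map] at h2
  · intro h
    rw [Ideal.map_comap_of_equiv e]
    haveI := h
    exact Ideal.comap_isPrime e.symm I

/-- The subset of `Fin n` associated to a vertex of `PIS R`. -/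
noncomputable def vset (v : PISVertex R) : Set (Fin n) :=
  suppI (Ideal.map (e : R →+* ∀ i, F i) v.1)

lemma map_vset (v : PISVertex R) :
    Ideal.map (e : R →+* ∀ i, F i) v.1 = idealOf F (vset e v) := (idealOf_suppI _).symm

lemma vset_ne_empty (v : PISVertex R) : vset e v ≠ ∅ := by
  intro h
  apply v.2.1
  have h2 : Ideal.map (e : R →+* ∀ i, F i) v.1 = ⊥ := by
    rw [map_vset, h]
    exact idealOf_eq_bot_iff.2 rfl
  exact (Ideal.map_eq_bot_iff_of_injective e.injective).1 h2

lemma vset_ne_univ (v : PISVertex R) : vset e v ≠ Set.univ := by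
  intro h
  apply v.2.2
  have h2 : Ideal.map (e : R →+* ∀ i, F i) v.1 = ⊤ := by
    rw [map_vset, h, idealOf_eq_top_iff]
  have h3 := congrArg (Ideal.map (e.symm : (∀ i, F i) →+* R)) h2
  rw [map_symm_map, Ideal.map_top] at h3
  exact h3

lemma vset_injective : Function.Injective (vset e) := by
  intro u v h
  have h2 : Ideal.map (e : R →+* ∀ i, F i) u.1 = Ideal.map (e : R →+* ∀ i, F i) v.1 := by
    rw [map_vset, map_vset, h]
  have h3 := congrArg (Ideal.map (e.symm : (∀ i, F i) →+* R)) h2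
  rw [map_symm_map, map_symm_map] at h3
  exact Subtype.ext h3

/-- The vertex of `PIS R` associated to a nonempty proper subset of `Fin n`. -/
noncomputable def vtx (s : Set (Fin n)) (h1 : s ≠ ∅) (h2 : s ≠ Set.univ) : PISVertex R :=
  ⟨Ideal.map (e.symm : (∀ i, F i) →+* R) (idealOf F s),
   fun hbot => h1 (idealOf_eq_bot_iff.1
     ((Ideal.map_eq_bot_iff_of_injective e.symm.injective).1 hbot)),
   fun htop => h2 (idealOf_eq_top_iff.1 (by
     have h3 := congrArg (Ideal.map (e : R →+* ∀ i, F i)) htop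
     rwa [map_map_symm, Ideal.map_top] at h3))⟩

lemma vset_vtx (s : Set (Fin n)) (h1 : s ≠ ∅) (h2 : s ≠ Set.univ) :
    vset e (vtx e s h1 h2) = s := by
  show suppI (Ideal.map (e : R →+* ∀ i, F i)
    (Ideal.map (e.symm : (∀ i, F i) →+* R) (idealOf F s))) = s
  rw [map_map_symm, suppI_idealOf]

lemma adj_iff {u v : PISVertex R} :
    (PIS R).Adj u v ↔ u ≠ v ∧ ∃ j, vset e u ∪ vset e v = ({j}ᶜ : Set (Fin n)) := by
  show (u ≠ v ∧ (u.1 + v.1).IsPrime) ↔ _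
  refine and_congr_right fun _ => ?_
  rw [Submodule.add_eq_sup, ← isPrime_map_iff e, Ideal.map_sup, map_vset, map_vset,
    idealOf_sup, idealOf_isPrime_iff]

/-- The vertex correspondence between `PIS R` and nonempty proper subsets of `Fin n`. -/
noncomputable def vertEquiv : PISVertex R ≃ {s : Set (Fin n) // s ≠ ∅ ∧ s ≠ Set.univ} where
  toFun v := ⟨vset e v, vset_ne_empty e v, vset_ne_univ e v⟩
  invFun s := vtx e s.1 s.2.1 s.2.2
  left_inv v := by
    apply Subtype.ext
    show Ideal.map (e.symm : (∀ i, F i) →+* R) (idealOf F (vset e v)) = v.1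
    rw [← map_vset e v, map_symm_map]
  right_inv s := by
    apply Subtype.ext
    exact vset_vtx e s.1 s.2.1 s.2.2

end Transport



section GraphLemmas

variable {R : Type*} [CommRing R] {n : ℕ} {F : Fin n → Type*} [∀ i, Field (F i)]

lemma exists_ne_ne (hn : 4 ≤ n) (i j : Fin n) : ∃ k : Fin n, k ≠ i ∧ k ≠ j := by
  by_cases h0 : (⟨0, by omega⟩ : Fin n) ≠ i ∧ (⟨0, by omega⟩ : Fin n) ≠ j
  · exact ⟨_, h0⟩
  by_cases h1 : (⟨1, by omega⟩ : Fin n) ≠ i ∧ (⟨1, by omega⟩ : Fin n) ≠ j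
  · exact ⟨_, h1⟩
  by_cases h2 : (⟨2, by omega⟩ : Fin n) ≠ i ∧ (⟨2, by omega⟩ : Fin n) ≠ j
  · exact ⟨_, h2⟩
  exfalso
  simp only [not_and_or, not_not] at h0 h1 h2
  rcases h0 with h0 | h0 <;> rcases h1 with h1 | h1 <;> rcases h2 with h2 | h2 <;>
    simp_all [Fin.ext_iff] <;> omega

lemma exists_common (e : R ≃+* ∀ i, F i) (hn : 4 ≤ n) {u v : PISVertex R} (hne : u ≠ v)
    (hadj : ¬ (PIS R).Adj u v) : ∃ w, (PIS R).Adj u w ∧ (PIS R).Adj w v := by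
  have hnoj : ¬ ∃ j, vset e u ∪ vset e v = ({j}ᶜ : Set (Fin n)) :=
    fun hj => hadj ((adj_iff e).2 ⟨hne, hj⟩)
  by_cases hU : vset e u ∪ vset e v = Set.univ
  · obtain ⟨i, hi⟩ := (Set.ne_univ_iff_exists_notMem _).1 (vset_ne_univ e u)
    obtain ⟨j, hj⟩ := (Set.ne_univ_iff_exists_notMem _).1 (vset_ne_univ e v)
    have hiv : i ∈ vset e v := by
      have h' : i ∈ vset e u ∪ vset e v := hU.symm ▸ Set.mem_univ i
      exact h'.resolve_left hi
    have hju : j ∈ vset e u := by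
      have h' : j ∈ vset e u ∪ vset e v := hU.symm ▸ Set.mem_univ j
      exact h'.resolve_right hj
    obtain ⟨k, hki, hkj⟩ := exists_ne_ne hn i j
    have hsw1 : ({i, j} : Set (Fin n))ᶜ ≠ ∅ :=
      Set.nonempty_iff_ne_empty.1 ⟨k, by simp [hki, hkj]⟩
    have hsw2 : ({i, j} : Set (Fin n))ᶜ ≠ Set.univ :=
      (Set.ne_univ_iff_exists_notMem _).2 ⟨i, by simp⟩
    refine ⟨vtx e _ hsw1 hsw2, ?_, ?_⟩
    · refine (adj_iff e).2 ⟨?_, ⟨i, ?_⟩⟩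
      · intro h
        have h2 := congrArg (vset e) h
        rw [vset_vtx] at h2
        have h3 := h2 ▸ hju
        simp at h3
      · rw [vset_vtx]
        ext x
        simp only [Set.mem_union, Set.mem_compl_iff, Set.mem_insert_iff,
          Set.mem_singleton_iff]
        constructor
        · rintro (hx | hx)
          · intro hxi; exact hi (hxi ▸ hx)
          · intro hxi; exact hx (Or.inl hxi)
        · intro hx
          by_cases hxj : x = j
          · exact Or.inl (hxj ▸ hju)
          · exact Or.inr (fun h => h.elim hx hxj)
    · refine (adj_iff e).2 ⟨?_, ⟨j, ?_⟩⟩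
      · intro h
        have h2 := congrArg (vset e) h
        rw [vset_vtx] at h2
        have h3 := h2.symm ▸ hiv
        simp at h3
      · rw [vset_vtx]
        ext x
        simp only [Set.mem_union, Set.mem_compl_iff, Set.mem_insert_iff,
          Set.mem_singleton_iff]
        constructor
        · rintro (hx | hx)
          · intro hxj; exact hx (Or.inr hxj)
          · intro hxj; exact hj (hxj ▸ hx)
        · intro hx
          by_cases hxi : x = i
          · exact Or.inr (hxi ▸ hiv)
          · exact Or.inl (fun h => h.elim hxi hx)
  · obtain ⟨i, hi⟩ := (Set.ne_univ_iff_exists_notMem _).1 hU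
    have hi1 : i ∉ vset e u := fun h => hi (Or.inl h)
    have hi2 : i ∉ vset e v := fun h => hi (Or.inr h)
    have hsub_u : vset e u ⊆ ({i} : Set (Fin n))ᶜ :=
      fun x hx hxi => hi1 ((Set.mem_singleton_iff.1 hxi) ▸ hx)
    have hsub_v : vset e v ⊆ ({i} : Set (Fin n))ᶜ :=
      fun x hx hxi => hi2 ((Set.mem_singleton_iff.1 hxi) ▸ hx)
    obtain ⟨k, hki, _⟩ := exists_ne_ne hn i i
    have hsw1 : ({i} : Set (Fin n))ᶜ ≠ ∅ :=
      Set.nonempty_iff_ne_empty.1 ⟨k, by simp [hki]⟩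
    have hsw2 : ({i} : Set (Fin n))ᶜ ≠ Set.univ :=
      (Set.ne_univ_iff_exists_notMem _).2 ⟨i, by simp⟩
    refine ⟨vtx e _ hsw1 hsw2, ?_, ?_⟩
    · refine (adj_iff e).2 ⟨?_, ⟨i, ?_⟩⟩
      · intro h
        have h2 := congrArg (vset e) h
        rw [vset_vtx] at h2
        exact hnoj ⟨i, by rw [h2]; exact Set.union_eq_self_of_subset_right hsub_v⟩
      · rw [vset_vtx]
        exact Set.union_eq_self_of_subset_left hsub_u
    · refine (adj_iff e).2 ⟨?_, ⟨i, ?_⟩⟩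
      · intro h
        have h2 := congrArg (vset e) h
        rw [vset_vtx] at h2
        exact hnoj ⟨i, by rw [← h2]; exact Set.union_eq_self_of_subset_left hsub_u⟩
      · rw [vset_vtx]
        exact Set.union_eq_self_of_subset_right hsub_v

lemma reachable_of_ne (e : R ≃+* ∀ i, F i) (hn : 4 ≤ n) {u v : PISVertex R} (hne : u ≠ v) :
    (PIS R).Reachable u v := by
  by_cases hadj : (PIS R).Adj u v
  · exact hadj.reachable
  · obtain ⟨w, h1, h2⟩ := exists_common e hn hne hadj
    exact h1.reachable.trans h2.reachable

lemma dist_eq_two (e : R ≃+* ∀ i, F i) (hn : 4 ≤ n) {u v : PISVertex R} (hne : u ≠ v)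
    (hadj : ¬ (PIS R).Adj u v) : (PIS R).dist u v = 2 := by
  obtain ⟨w, h1, h2⟩ := exists_common e hn hne hadj
  have hle : (PIS R).dist u v ≤ 2 := by
    have hw := SimpleGraph.dist_le (SimpleGraph.Walk.cons h1 h2.toWalk)
    simpa using hw
  have h0 : (PIS R).dist u v ≠ 0 := by
    intro h
    rcases SimpleGraph.dist_eq_zero_iff_eq_or_not_reachable.1 h with h' | h'
    · exact hne h'
    · exact h' (reachable_of_ne e hn hne)
  have h1' : (PIS R).dist u v ≠ 1 := fun h => hadj (SimpleGraph.dist_eq_one_iff_adj.1 h)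
  omega

lemma aux_pow : ∀ m : ℕ, 4 ≤ m → m + 1 < 2 ^ (m - 1) := by
  intro m h
  induction m with
  | zero => omega
  | succ k ih =>
    by_cases hk : 4 ≤ k
    · have h1 := ih hk
      have h2 : 2 ^ (k + 1 - 1) = 2 * 2 ^ (k - 1) := by
        rw [Nat.succ_sub_one]
        conv_lhs => rw [show k = (k - 1) + 1 by omega]
        rw [pow_succ]
        ring
      omega
    · have hk3 : k = 3 := by omega
      subst hk3
      norm_num

end GraphLemmas

/-- If `R` is isomorphic to a direct product of `n ≥ 4` fields, then the metric dimension
of its prime ideal sum graph equals `n`. -/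
theorem metricDim_PIS_n_fields {R : Type*} [CommRing R] {n : ℕ} (hn : 4 ≤ n)
    (F : Fin n → Type*) [∀ i, Field (F i)] (e : R ≃+* ∀ i, F i) :
    metricDim (PIS R) = n := by
  classical
  haveI : Nonempty (Fin n) := ⟨⟨0, by omega⟩⟩
  haveI : Fintype (PISVertex R) := Fintype.ofEquiv _ (vertEquiv e).symm
  apply le_antisymm
  · -- upper bound: the n maximal ideals form a resolving set
    have hcompl_ne : ∀ j : Fin n, ({j} : Set (Fin n))ᶜ ≠ ∅ := by
      intro j
      obtain ⟨k, hk, _⟩ := exists_ne_ne hn j j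
      exact Set.nonempty_iff_ne_empty.1 ⟨k, by simp [hk]⟩
    have hcompl_nu : ∀ j : Fin n, ({j} : Set (Fin n))ᶜ ≠ Set.univ := by
      intro j
      exact (Set.ne_univ_iff_exists_notMem _).2 ⟨j, by simp⟩
    set g : Fin n → PISVertex R := fun j => vtx e ({j}ᶜ) (hcompl_ne j) (hcompl_nu j) with hg
    have hvg : ∀ j, vset e (g j) = ({j} : Set (Fin n))ᶜ := fun j => vset_vtx e _ _ _
    have hginj : Function.Injective g := by
      intro a b h
      have h2 : ({a} : Set (Fin n))ᶜ = ({b} : Set (Fin n))ᶜ := by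
        rw [← hvg a, ← hvg b, h]
      have h3 : a ∈ ({a} : Set (Fin n)) := rfl
      by_contra hab
      have : a ∈ ({b} : Set (Fin n))ᶜ := fun hmem => hab (Set.mem_singleton_iff.1 hmem)
      rw [← h2] at this
      exact this rfl
    have key : ∀ u v : PISVertex R, u ∉ Set.range g → v ∉ Set.range g →
        (∃ j, j ∉ vset e u ∧ j ∈ vset e v) →
        ∃ w ∈ Set.range g, (PIS R).dist u w ≠ (PIS R).dist v w := by
      rintro u v hu hv ⟨j, hju, hjv⟩
      refine ⟨g j, Set.mem_range_self j, ?_⟩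
      have hadj : (PIS R).Adj u (g j) := by
        refine (adj_iff e).2 ⟨fun h => hu (h ▸ Set.mem_range_self j), ⟨j, ?_⟩⟩
        rw [hvg]
        exact Set.union_eq_self_of_subset_left
          (fun x hx hxj => hju ((Set.mem_singleton_iff.1 hxj) ▸ hx))
      have hnadj : ¬ (PIS R).Adj v (g j) := by
        intro h
        obtain ⟨-, k, hk⟩ := (adj_iff e).1 h
        rw [hvg] at hk
        have huniv : vset e v ∪ ({j} : Set (Fin n))ᶜ = Set.univ := by
          apply Set.eq_univ_of_forall
          intro x
          by_cases hxj : x = j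
          · exact Or.inl (hxj ▸ hjv)
          · exact Or.inr (fun hmem => hxj (Set.mem_singleton_iff.1 hmem))
        rw [huniv] at hk
        have : k ∈ ({k} : Set (Fin n))ᶜ := hk ▸ Set.mem_univ k
        exact this rfl
      have h1 : (PIS R).dist u (g j) = 1 := SimpleGraph.dist_eq_one_iff_adj.2 hadj
      have h2 : (PIS R).dist v (g j) ≠ 1 :=
        fun h => hnadj (SimpleGraph.dist_eq_one_iff_adj.1 h)
      omega
    have hres : IsResolvingSet (PIS R) (Set.range g) := by
      intro u v huv hboth
      by_cases hu : u ∈ Set.range g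
      · refine ⟨u, hu, ?_⟩
        have h1 : (PIS R).dist u u = 0 := SimpleGraph.dist_self
        have h2 : 0 < (PIS R).dist v u :=
          (reachable_of_ne e hn (Ne.symm huv)).pos_dist_of_ne (Ne.symm huv)
        omega
      by_cases hv : v ∈ Set.range g
      · refine ⟨v, hv, ?_⟩
        have h1 : (PIS R).dist v v = 0 := SimpleGraph.dist_self
        have h2 : 0 < (PIS R).dist u v := (reachable_of_ne e hn huv).pos_dist_of_ne huv
        omega
      · have hsne : vset e u ≠ vset e v := fun h => huv (vset_injective e h)
        have hcases : (∃ j, j ∉ vset e u ∧ j ∈ vset e v) ∨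
            (∃ j, j ∉ vset e v ∧ j ∈ vset e u) := by
          by_contra hc
          push_neg at hc
          obtain ⟨h1, h2⟩ := hc
          apply hsne
          ext x
          constructor
          · intro hx
            by_contra hx2
            exact h2 x hx2 hx
          · intro hx
            by_contra hx2
            exact h1 x hx2 hx
        rcases hcases with ⟨j, hj⟩ | ⟨j, hj⟩
        · exact key u v hu hv ⟨j, hj⟩
        · obtain ⟨w, hw, hd⟩ := key v u hv hu ⟨j, hj⟩
          exact ⟨w, hw, hd.symm⟩
    have henc : (Set.range g).encard = n := by
      rw [← Set.image_univ, hginj.encard_image, Set.encard_univ,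
        ENat.card_eq_coe_fintype_card, Fintype.card_fin]
    calc metricDim (PIS R) ≤ (Set.range g).encard :=
          iInf_le (fun S : {S : Set (PISVertex R) // IsResolvingSet (PIS R) S} =>
            (S : Set (PISVertex R)).encard) ⟨Set.range g, hres⟩
      _ = n := henc
  · -- lower bound
    show (n : ℕ∞) ≤ ⨅ S : {S : Set (PISVertex R) // IsResolvingSet (PIS R) S},
      (S : Set (PISVertex R)).encard
    refine le_iInf ?_
    rintro ⟨S, hS⟩
    show (n : ℕ∞) ≤ S.encard
    by_contra hlt
    push_neg at hlt
    set k := Fintype.card ↥S with hk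
    have hkn : k < n := by
      have hco : S.encard = (k : ℕ∞) := by
        rw [Set.encard_eq_coe_toFinset_card, Set.toFinset_card]
      rw [hco] at hlt
      exact_mod_cast hlt
    set f : ↥(Sᶜ) → Set ↥S := fun v => {w : ↥S | (PIS R).Adj v.1 w.1} with hf
    have hfinj : Function.Injective f := by
      intro u v huv
      by_contra hne
      have hne' : u.1 ≠ v.1 := fun h => hne (Subtype.ext h)
      obtain ⟨w, hwS, hdist⟩ := hS u.1 v.1 hne' (fun h => u.2 h.1)
      have hadj_iff : (PIS R).Adj u.1 w ↔ (PIS R).Adj v.1 w := by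
        have h' := congrArg (fun t => (⟨w, hwS⟩ : ↥S) ∈ t) huv
        simpa [hf] using h'
      have hwu : u.1 ≠ w := fun h => u.2 (h ▸ hwS)
      have hwv : v.1 ≠ w := fun h => v.2 (h ▸ hwS)
      by_cases hadj : (PIS R).Adj u.1 w
      · have h1 : (PIS R).dist u.1 w = 1 := SimpleGraph.dist_eq_one_iff_adj.2 hadj
        have h2 : (PIS R).dist v.1 w = 1 :=
          SimpleGraph.dist_eq_one_iff_adj.2 (hadj_iff.1 hadj)
        exact hdist (h1.trans h2.symm)
      · have h1 := dist_eq_two e hn hwu hadj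
        have h2 := dist_eq_two e hn hwv (fun h => hadj (hadj_iff.2 h))
        exact hdist (h1.trans h2.symm)
    have hcard := Fintype.card_le_of_injective f hfinj
    rw [Fintype.card_set, ← hk] at hcard
    have hcompl : Fintype.card ↥(Sᶜ) = Fintype.card (PISVertex R) - k :=
      Fintype.card_compl_set S
    have hV : Fintype.card (PISVertex R) = 2 ^ n - 2 := by
      rw [Fintype.card_congr (vertEquiv e)]
      have heq : Fintype.card {s : Set (Fin n) // s ≠ ∅ ∧ s ≠ Set.univ} =
          Fintype.card {s : Set (Fin n) // ¬ (s = ∅ ∨ s = Set.univ)} :=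
        Fintype.card_congr (Equiv.subtypeEquivRight (fun s => by tauto))
      have h1 : Fintype.card {s : Set (Fin n) // ¬ (s = ∅ ∨ s = Set.univ)} =
          Fintype.card (Set (Fin n)) -
            Fintype.card {s : Set (Fin n) // s = ∅ ∨ s = Set.univ} :=
        Fintype.card_subtype_compl _
      have h2 : Fintype.card {s : Set (Fin n) // s = ∅ ∨ s = Set.univ} = 2 := by
        rw [← Nat.card_eq_fintype_card, Nat.card_eq_two_iff]
        refine ⟨⟨∅, Or.inl rfl⟩, ⟨Set.univ, Or.inr rfl⟩, ?_, ?_⟩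
        · intro h
          exact Set.empty_ne_univ (congrArg Subtype.val h)
        · apply Set.eq_univ_of_forall
          rintro ⟨s, hs | hs⟩
          · simp only [Set.mem_insert_iff, Set.mem_singleton_iff]
            exact Or.inl (Subtype.ext hs)
          · simp only [Set.mem_insert_iff, Set.mem_singleton_iff]
            exact Or.inr (Subtype.ext hs)
      rw [heq, h1, h2, Fintype.card_set, Fintype.card_fin]
    rw [hcompl, hV] at hcard
    -- hcard : 2 ^ n - 2 - k ≤ 2 ^ k
    have hpow : 2 ^ k ≤ 2 ^ (n - 1) := Nat.pow_le_pow_right (by norm_num) (by omega)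
    have hbig : n + 1 < 2 ^ (n - 1) := aux_pow n hn
    have h2n : 2 ^ n = 2 * 2 ^ (n - 1) := by
      conv_lhs => rw [show n = (n - 1) + 1 by omega]
      rw [pow_succ]
      ring
    omega
end

section
/- Let n ≥ 1 and let R ≅ R₁ × ⋯ × Rₙ, where each Rᵢ is a commutative ring with identity having exactly one nonzero proper ideal 𝔪ᵢ. Then the metric dimension of the prime ideal sum graph PIS(R) is at most 2n. -/
open scoped Classical

section PISAux

variable {n : ℕ} {Rs : Fin n → Type*} [∀ i, CommRing (Rs i)]

/-- Projection of an ideal of a finite product ring to a coordinate. -/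
noncomputable def prIdeal (i : Fin n) (I : Ideal (∀ j, Rs j)) : Ideal (Rs i) :=
  I.map (Pi.evalRingHom Rs i)

lemma evalRingHom_surjective (i : Fin n) : Function.Surjective (Pi.evalRingHom Rs i) :=
  fun z => ⟨Pi.single i z, Pi.single_eq_same i z⟩

lemma mem_iff_prIdeal (I : Ideal (∀ j, Rs j)) (x : ∀ j, Rs j) :
    x ∈ I ↔ ∀ i, x i ∈ prIdeal i I := by
  constructor
  · exact fun hx i => Ideal.mem_map_of_mem _ hx
  · intro h
    have hx : x = ∑ i, Pi.single i (x i) := (Finset.univ_sum_single x).symm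
    rw [hx]
    refine Ideal.sum_mem _ fun i _ => ?_
    obtain ⟨y, hy, hyx⟩ :=
      (Ideal.mem_map_iff_of_surjective _ (evalRingHom_surjective i)).mp (h i)
    have hsingle : Pi.single i (x i) = y * Pi.single i 1 := by
      funext k
      rcases eq_or_ne k i with rfl | hk
      · simp only [Pi.single_eq_same, Pi.mul_apply]
        have : y k = x k := hyx
        simp [this]
      · simp [Pi.single_eq_of_ne hk]
    rw [hsingle]
    exact I.mul_mem_right _ hy

lemma prIdeal_top (i : Fin n) : prIdeal i (⊤ : Ideal (∀ j, Rs j)) = ⊤ :=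
  Ideal.map_top _

lemma prIdeal_bot (i : Fin n) : prIdeal i (⊥ : Ideal (∀ j, Rs j)) = ⊥ :=
  Ideal.map_bot

lemma exists_prIdeal (J : ∀ i, Ideal (Rs i)) :
    ∃ I : Ideal (∀ j, Rs j), ∀ i, prIdeal i I = J i := by
  refine ⟨⨅ k, (J k).comap (Pi.evalRingHom Rs k), fun i => ?_⟩
  apply le_antisymm
  · rw [prIdeal, Ideal.map_le_iff_le_comap]
    exact iInf_le _ i
  · intro z hz
    have hmem : (Pi.single i z : ∀ j, Rs j) ∈ ⨅ k, (J k).comap (Pi.evalRingHom Rs k) := by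
      rw [Submodule.mem_iInf]
      intro k
      rcases eq_or_ne k i with rfl | hk
      · simpa using hz
      · simpa [Ideal.mem_comap, Pi.single_eq_of_ne hk] using (J k).zero_mem
    simpa [prIdeal] using Ideal.mem_map_of_mem (Pi.evalRingHom Rs i) hmem

lemma isPrime_iff_prIdeal (I : Ideal (∀ j, Rs j)) :
    I.IsPrime ↔ ∃ j, (prIdeal j I).IsPrime ∧ ∀ i, i ≠ j → prIdeal i I = ⊤ := by
  constructor
  · intro hI
    have hne : ∃ j, prIdeal j I ≠ ⊤ := by
      by_contra h
      push_neg at h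
      apply hI.ne_top
      ext x
      simp only [Submodule.mem_top, iff_true]
      rw [mem_iff_prIdeal]
      intro i
      rw [h i]
      trivial
    obtain ⟨j, hj⟩ := hne
    have htop : ∀ i, i ≠ j → prIdeal i I = ⊤ := by
      intro i hij
      have h0 : (Pi.single i 1 : ∀ j, Rs j) * Pi.single j 1 ∈ I := by
        have hz : (Pi.single i 1 : ∀ j, Rs j) * Pi.single j 1 = 0 := by
          funext k
          rcases eq_or_ne k i with rfl | hk
          · have hjk : (Pi.single j 1 : ∀ l, Rs l) k = 0 := Pi.single_eq_of_ne hij 1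
            simp [hjk]
          · simp [Pi.single_eq_of_ne hk]
        rw [hz]
        exact I.zero_mem
      rcases hI.mem_or_mem h0 with h | h
      · refine Ideal.eq_top_iff_one _ |>.mpr ?_
        simpa [prIdeal] using Ideal.mem_map_of_mem (Pi.evalRingHom Rs i) h
      · exact absurd (Ideal.eq_top_iff_one _ |>.mpr
          (by simpa [prIdeal] using Ideal.mem_map_of_mem (Pi.evalRingHom Rs j) h)) hj
    refine ⟨j, Ideal.isPrime_iff.mpr ⟨hj, ?_⟩, htop⟩
    intro a b hab
    have hsingle : (Pi.single j (a * b) : ∀ k, Rs k) ∈ I := by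
      rw [mem_iff_prIdeal]
      intro k
      rcases eq_or_ne k j with rfl | hk
      · simpa using hab
      · simpa [Pi.single_eq_of_ne hk] using (prIdeal k I).zero_mem
    rw [Pi.single_mul] at hsingle
    rcases hI.mem_or_mem hsingle with h | h
    · left; simpa [prIdeal] using Ideal.mem_map_of_mem (Pi.evalRingHom Rs j) h
    · right; simpa [prIdeal] using Ideal.mem_map_of_mem (Pi.evalRingHom Rs j) h
  · rintro ⟨j, hp, htop⟩
    have hI : I = (prIdeal j I).comap (Pi.evalRingHom Rs j) := by
      ext x
      rw [mem_iff_prIdeal, Ideal.mem_comap]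
      constructor
      · intro h; exact h j
      · intro h k
        rcases eq_or_ne k j with rfl | hk
        · exact h
        · rw [htop k hk]; trivial
    rw [hI]
    exact Ideal.IsPrime.comap _ (hK := hp)

/-- In a commutative ring with exactly one nonzero proper ideal `m`,
an ideal is prime iff it equals `m`. -/
lemma prime_iff_of_unique {A : Type*} [CommRing A] {m : Ideal A}
    (hm1 : m ≠ ⊥) (hm2 : m ≠ ⊤) (hu : ∀ I : Ideal A, I ≠ ⊥ ∧ I ≠ ⊤ → I = m)
    (P : Ideal A) : P.IsPrime ↔ P = m := by
  have class3 : ∀ I : Ideal A, I = ⊥ ∨ I = m ∨ I = ⊤ := by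
    intro I
    by_cases h1 : I = ⊥
    · exact Or.inl h1
    by_cases h2 : I = ⊤
    · exact Or.inr (Or.inr h2)
    exact Or.inr (Or.inl (hu I ⟨h1, h2⟩))
  constructor
  · intro hP
    rcases class3 P with h | h | h
    · exfalso
      subst h
      obtain ⟨x, hxm, hx0⟩ := (Submodule.ne_bot_iff m).mp hm1
      have hspan_le : Ideal.span {x} ≤ m := Ideal.span_le.mpr (Set.singleton_subset_iff.mpr hxm)
      have hspan : Ideal.span {x} = m := by
        apply hu
        refine ⟨by simpa [Ideal.span_singleton_eq_bot] using hx0, fun htop => hm2 ?_⟩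
        exact top_le_iff.mp (htop ▸ hspan_le)
      rcases class3 (Ideal.span {x * x}) with h2 | h2 | h2
      · have hxx : x * x = 0 := Ideal.span_singleton_eq_bot.mp h2
        rcases hP.mem_or_mem (show x * x ∈ (⊥ : Ideal A) by simp [hxx]) with h3 | h3 <;>
          exact hx0 (by simpa using h3)
      · have hx_mem : x ∈ Ideal.span {x * x} := by rw [h2, ← hspan]; exact Ideal.mem_span_singleton_self x
        obtain ⟨a, ha⟩ := Ideal.mem_span_singleton'.mp hx_mem
        have h0 : x * (1 - a * x) = 0 := by linear_combination -ha
        rcases hP.mem_or_mem (show x * (1 - a * x) ∈ (⊥ : Ideal A) by simp [h0]) with h3 | h3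
        · exact hx0 (by simpa using h3)
        · have h1 : (1 : A) = a * x := by
            have h4 : 1 - a * x = 0 := by simpa using h3
            linear_combination h4
          refine hm2 ((Ideal.eq_top_iff_one m).mpr ?_)
          rw [h1]
          exact m.mul_mem_left a hxm
      · exfalso
        apply hm2
        have : Ideal.span {x * x} ≤ m := Ideal.span_le.mpr
          (Set.singleton_subset_iff.mpr (m.mul_mem_left x hxm))
        exact top_le_iff.mp (h2 ▸ this)
    · exact h
    · exact absurd h hP.ne_top
  · intro h
    subst h
    refine Ideal.IsMaximal.isPrime ⟨⟨hm2, fun J hJ => ?_⟩⟩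
    rcases class3 J with rfl | rfl | rfl
    · exact absurd hJ (by simp)
    · exact absurd hJ (lt_irrefl _)
    · rfl

end PISAux

set_option maxHeartbeats 1000000 in
/-- If `R` is isomorphic to a direct product of `n ≥ 1` rings each having exactly one
nonzero proper ideal, then the metric dimension of `PIS R` is at most `2 * n`. -/
theorem metricDim_PIS_le_two_mul {R : Type*} [CommRing R] {n : ℕ} (hn : 1 ≤ n)
    (Rs : Fin n → Type*) [∀ i, CommRing (Rs i)]
    (huniq : ∀ i, ∃! I : Ideal (Rs i), I ≠ ⊥ ∧ I ≠ ⊤)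
    (e : R ≃+* ∀ i, Rs i) :
    metricDim (PIS R) ≤ 2 * n := by
  classical
  choose m hm using huniq
  set eh : R →+* ∀ i, Rs i := (e : R →+* ∀ i, Rs i) with heh
  set F : Ideal R → ∀ i, Ideal (Rs i) := fun I i => prIdeal i (I.map eh) with hFdef
  have e_mem : ∀ (I : Ideal R) (x : R), x ∈ I ↔ e x ∈ I.map eh := by
    intro I x
    constructor
    · exact fun h => Ideal.mem_map_of_mem _ h
    · intro h
      obtain ⟨y, hy, hyx⟩ := (Ideal.mem_map_iff_of_surjective eh e.surjective).mp h
      rwa [← e.injective hyx]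
  have memF : ∀ (I : Ideal R) (x : R), x ∈ I ↔ ∀ i, e x i ∈ F I i := by
    intro I x
    rw [e_mem, mem_iff_prIdeal]
  have eqF : ∀ {I J : Ideal R}, F I = F J → I = J := by
    intro I J h
    ext x
    rw [memF, memF, h]
  have F_surj : ∀ J : ∀ i, Ideal (Rs i), ∃ I : Ideal R, F I = J := by
    intro J
    obtain ⟨K, hK⟩ := exists_prIdeal J
    refine ⟨K.comap eh, ?_⟩
    have hmc : (K.comap eh).map eh = K := by
      ext y
      constructor
      · intro hy
        obtain ⟨x, hx, rfl⟩ := (Ideal.mem_map_iff_of_surjective eh e.surjective).mp hy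
        exact hx
      · intro hy
        obtain ⟨x, rfl⟩ := e.surjective y
        exact Ideal.mem_map_of_mem _ (by simpa [Ideal.mem_comap, heh] using hy)
    funext i
    simp only [hFdef, hmc, hK]
  have F_bot : F ⊥ = fun _ => ⊥ := by
    funext i
    simp [hFdef, Ideal.map_bot, prIdeal_bot]
  have F_top : F ⊤ = fun _ => ⊤ := by
    funext i
    simp [hFdef, Ideal.map_top, prIdeal_top]
  have F_sup : ∀ (I J : Ideal R) (i : Fin n), F (I + J) i = F I i ⊔ F J i := by
    intro I J i
    simp [hFdef, Ideal.add_eq_sup, Ideal.map_sup, prIdeal, Ideal.map_sup]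
  have F_prime : ∀ I : Ideal R,
      I.IsPrime ↔ ∃ j, F I j = m j ∧ ∀ i, i ≠ j → F I i = ⊤ := by
    intro I
    have h1 : I.IsPrime ↔ (I.map eh).IsPrime := by
      constructor
      · intro h
        haveI := h
        exact Ideal.map_isPrime_of_equiv e (I := I)
      · intro h
        have hcomap : I = (I.map eh).comap eh := by
          ext x
          rw [Ideal.mem_comap]
          exact e_mem I x
        rw [hcomap]
        exact Ideal.IsPrime.comap _ (hK := h)
    rw [h1, isPrime_iff_prIdeal]
    apply exists_congr
    intro j
    rw [prime_iff_of_unique (hm j).1.1 (hm j).1.2 (fun I hI => (hm j).2 I hI)]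
  have class3 : ∀ (i : Fin n) (I : Ideal (Rs i)), I = ⊥ ∨ I = m i ∨ I = ⊤ := by
    intro i I
    by_cases h1 : I = ⊥
    · exact Or.inl h1
    by_cases h2 : I = ⊤
    · exact Or.inr (Or.inr h2)
    exact Or.inr (Or.inl ((hm i).2 I ⟨h1, h2⟩))
  have botne : ∀ i : Fin n, (⊥ : Ideal (Rs i)) ≠ ⊤ := by
    intro i h
    apply (hm i).1.1
    apply le_bot_iff.mp
    rw [h]
    exact le_top
  -- the distinguished vertices
  choose Pid hPid using fun j : Fin n =>
    F_surj (Function.update (⊤ : ∀ i, Ideal (Rs i)) j (m j))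
  choose Qid hQid using fun j : Fin n =>
    F_surj (Function.update (⊤ : ∀ i, Ideal (Rs i)) j ⊥)
  have FP_same : ∀ j, F (Pid j) j = m j := by
    intro j; rw [hPid]; exact Function.update_self _ _ _
  have FP_ne : ∀ j i, i ≠ j → F (Pid j) i = ⊤ := by
    intro j i hij; rw [hPid]; rw [Function.update_of_ne hij]; rfl
  have FQ_same : ∀ j, F (Qid j) j = ⊥ := by
    intro j; rw [hQid]; exact Function.update_self _ _ _
  have FQ_ne : ∀ j i, i ≠ j → F (Qid j) i = ⊤ := by
    intro j i hij; rw [hQid]; rw [Function.update_of_ne hij]; rfl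
  have Pid_ne_bot : ∀ j, Pid j ≠ ⊥ := by
    intro j h
    apply (hm j).1.1
    rw [← FP_same j, h, F_bot]
  have Pid_ne_top : ∀ j, Pid j ≠ ⊤ := by
    intro j h
    apply (hm j).1.2
    rw [← FP_same j, h, F_top]
  have Qid_ne_top : ∀ j, Qid j ≠ ⊤ := by
    intro j h
    apply botne j
    rw [← FQ_same j, h, F_top]
  set pv : Fin n → PISVertex R := fun j => ⟨Pid j, Pid_ne_bot j, Pid_ne_top j⟩ with hpv
  set qv : Fin n → PISVertex R := fun j =>
    if h : Qid j ≠ ⊥ then ⟨Qid j, h, Qid_ne_top j⟩ else pv j with hqv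
  set g : Fin n × Bool → PISVertex R := fun x => cond x.2 (pv x.1) (qv x.1) with hg
  set S : Set (PISVertex R) := Set.range g with hS
  -- adjacency characterization
  have adj_char : ∀ (j : Fin n) (a : Ideal (Rs j)) (u w : PISVertex R),
      F w.1 = Function.update (⊤ : ∀ i, Ideal (Rs i)) j a →
      ((PIS R).Adj u w ↔ (u ≠ w ∧ F u.1 j ⊔ a = m j)) := by
    intro j a u w hw
    have hshow : (PIS R).Adj u w ↔ (u ≠ w ∧ (u.1 + w.1).IsPrime) := Iff.rfl
    rw [hshow, F_prime]
    constructor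
    · rintro ⟨hne, j', hj', htop'⟩
      refine ⟨hne, ?_⟩
      rcases eq_or_ne j' j with rfl | hjj
      · rw [F_sup, hw, Function.update_self] at hj'
        exact hj'
      · exfalso
        rw [F_sup, hw, Function.update_of_ne hjj] at hj'
        have : (⊤ : Ideal (Rs j')) = m j' := by
          rw [← hj']
          simp
        exact (hm j').1.2 this.symm
    · rintro ⟨hne, hsup⟩
      refine ⟨hne, j, ?_, ?_⟩
      · rw [F_sup, hw, Function.update_self]
        exact hsup
      · intro i hij
        rw [F_sup, hw, Function.update_of_ne hij]
        simp
  have adj_p : ∀ (j : Fin n) (u : PISVertex R), F u.1 j = ⊥ → (PIS R).Adj u (pv j) := by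
    intro j u hu
    rw [adj_char j (m j) u (pv j) (hPid j)]
    refine ⟨?_, by rw [hu, bot_sup_eq]⟩
    intro hEq
    apply (hm j).1.1
    have h2 : F u.1 j = F (Pid j) j := by rw [congrArg Subtype.val hEq]
    rw [hu, FP_same j] at h2
    exact h2.symm
  have nadj_p : ∀ (j : Fin n) (u : PISVertex R), F u.1 j = ⊤ → ¬ (PIS R).Adj u (pv j) := by
    intro j u htop hadj
    rw [adj_char j (m j) u (pv j) (hPid j)] at hadj
    rw [htop, top_sup_eq] at hadj
    exact (hm j).1.2 hadj.2.symm
  have adj_q : ∀ (j : Fin n) (u : PISVertex R) (h : Qid j ≠ ⊥),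
      F u.1 j = m j → (PIS R).Adj u (qv j) := by
    intro j u h hu
    have hqvj : qv j = ⟨Qid j, h, Qid_ne_top j⟩ := by
      rw [hqv]; exact dif_pos h
    rw [hqvj, adj_char j ⊥ u ⟨Qid j, h, Qid_ne_top j⟩ (hQid j)]
    refine ⟨?_, by rw [hu, sup_bot_eq]⟩
    intro hEq
    apply (hm j).1.1
    have h2 : F u.1 j = F (Qid j) j := by rw [congrArg Subtype.val hEq]
    rw [hu, FQ_same j] at h2
    exact h2
  have nadj_q : ∀ (j : Fin n) (u : PISVertex R) (h : Qid j ≠ ⊥),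
      F u.1 j ≠ m j → ¬ (PIS R).Adj u (qv j) := by
    intro j u h hne hadj
    have hqvj : qv j = ⟨Qid j, h, Qid_ne_top j⟩ := by
      rw [hqv]; exact dif_pos h
    rw [hqvj, adj_char j ⊥ u ⟨Qid j, h, Qid_ne_top j⟩ (hQid j)] at hadj
    rw [sup_bot_eq] at hadj
    exact hne hadj.2
  have Q_ne_bot : ∀ (j k : Fin n), k ≠ j → Qid j ≠ ⊥ := by
    intro j k hk h
    apply botne k
    have : F (Qid j) k = ⊥ := by rw [h, F_bot]
    rw [FQ_ne j k hk] at this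
    exact this.symm
  have distinguish : ∀ (u v w : PISVertex R), (PIS R).Adj u w → ¬(PIS R).Adj v w →
      (PIS R).dist u w ≠ (PIS R).dist v w := by
    intro u v w ha hna h
    rw [(SimpleGraph.dist_eq_one_iff_adj).mpr ha] at h
    exact hna ((SimpleGraph.dist_eq_one_iff_adj).mp h.symm)
  have pv_mem : ∀ j, pv j ∈ S := fun j => ⟨(j, true), rfl⟩
  have qv_mem : ∀ j, qv j ∈ S := fun j => ⟨(j, false), rfl⟩
  -- the half lemma
  have half : ∀ (u v : PISVertex R) (j : Fin n),
      (F u.1 j = m j ∧ F v.1 j = ⊥) ∨ (F u.1 j = m j ∧ F v.1 j = ⊤) ∨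
        (F u.1 j = ⊥ ∧ F v.1 j = ⊤) →
      ∃ w ∈ S, (PIS R).dist u w ≠ (PIS R).dist v w := by
    intro u v j hcase
    rcases hcase with ⟨hu, hv⟩ | ⟨hu, hv⟩ | ⟨hu, hv⟩
    · have hvne : ∃ k, F v.1 k ≠ ⊥ := by
        by_contra hc
        push_neg at hc
        exact v.2.1 (eqF (by rw [F_bot]; funext k; exact hc k))
      obtain ⟨k, hk⟩ := hvne
      have hkj : k ≠ j := fun h => hk (by rw [h, hv])
      have hQ : Qid j ≠ ⊥ := Q_ne_bot j k hkj
      exact ⟨qv j, qv_mem j, distinguish u v (qv j) (adj_q j u hQ hu)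
        (nadj_q j v hQ (by rw [hv]; exact fun h => (hm j).1.1 h.symm))⟩
    · have hvne : ∃ k, F v.1 k ≠ ⊤ := by
        by_contra hc
        push_neg at hc
        exact v.2.2 (eqF (by rw [F_top]; funext k; exact hc k))
      obtain ⟨k, hk⟩ := hvne
      have hkj : k ≠ j := fun h => hk (by rw [h, hv])
      have hQ : Qid j ≠ ⊥ := Q_ne_bot j k hkj
      exact ⟨qv j, qv_mem j, distinguish u v (qv j) (adj_q j u hQ hu)
        (nadj_q j v hQ (by rw [hv]; exact fun h => (hm j).1.2 h.symm))⟩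
    · exact ⟨pv j, pv_mem j, distinguish u v (pv j) (adj_p j u hu) (nadj_p j v hv)⟩
  have key : ∀ u v : PISVertex R, u ≠ v →
      ∃ w ∈ S, (PIS R).dist u w ≠ (PIS R).dist v w := by
    intro u v huv
    have hFne : ∃ j, F u.1 j ≠ F v.1 j := by
      by_contra hc
      push_neg at hc
      exact huv (Subtype.ext (eqF (funext hc)))
    obtain ⟨j, hj⟩ := hFne
    have swap : (∃ w ∈ S, (PIS R).dist v w ≠ (PIS R).dist u w) →
        ∃ w ∈ S, (PIS R).dist u w ≠ (PIS R).dist v w := by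
      rintro ⟨w, h1, h2⟩
      exact ⟨w, h1, h2.symm⟩
    rcases class3 j (F u.1 j) with hu | hu | hu <;>
      rcases class3 j (F v.1 j) with hv | hv | hv
    · exact absurd (hu.trans hv.symm) hj
    · exact swap (half v u j (Or.inl ⟨hv, hu⟩))
    · exact half u v j (Or.inr (Or.inr ⟨hu, hv⟩))
    · exact half u v j (Or.inl ⟨hu, hv⟩)
    · exact absurd (hu.trans hv.symm) hj
    · exact half u v j (Or.inr (Or.inl ⟨hu, hv⟩))
    · exact swap (half v u j (Or.inr (Or.inr ⟨hv, hu⟩)))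
    · exact swap (half v u j (Or.inr (Or.inl ⟨hv, hu⟩)))
    · exact absurd (hu.trans hv.symm) hj
  have hres : IsResolvingSet (PIS R) S := fun u v huv _ => key u v huv
  have hle : metricDim (PIS R) ≤ S.encard :=
    iInf_le (fun T : {T : Set (PISVertex R) // IsResolvingSet (PIS R) T} =>
      (T : Set (PISVertex R)).encard) ⟨S, hres⟩
  refine hle.trans ?_
  have h1 : S = g '' Set.univ := by rw [Set.image_univ]
  rw [h1]
  refine (Set.encard_image_le _ _).trans ?_
  rw [Set.encard_univ]
  rw [ENat.card_eq_coe_fintype_card]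
  simp [Fintype.card_prod, mul_comm]
end

section
/- Let R ≅ R₁ × R₂, where R₁ and R₂ are commutative rings with identity each having exactly one nonzero proper ideal. Then the metric dimension of the prime ideal sum graph PIS(R) equals 3. -/
open scoped Classical

/-! ### Auxiliary combinatorial material -/

/-- Concrete adjacency table for the PIS graph of `R₁ × R₂` (7 vertices). -/
def adjT (i j : Fin 7) : Bool :=
  let E : List (Fin 7 × Fin 7) :=
    [(0,4),(0,5),(0,6),(1,2),(1,3),(1,4),(2,4),(2,6),(3,4),(3,5),(3,6),(5,6)]
  ((i,j) ∈ E) || ((j,i) ∈ E)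

lemma subset_pair_of_encard_lt_three {α : Type*} [Nonempty α] {s : Set α}
    (h : s.encard < 3) : ∃ a b, s ⊆ {a, b} := by
  rcases s.eq_empty_or_nonempty with rfl | ⟨a, ha⟩
  · exact ⟨Classical.arbitrary α, Classical.arbitrary α, by simp⟩
  by_cases hb : ∃ b ∈ s, b ≠ a
  · obtain ⟨b, hbs, hba⟩ := hb
    refine ⟨a, b, fun c hc => ?_⟩
    by_contra hcab
    simp only [Set.mem_insert_iff, Set.mem_singleton_iff, not_or] at hcab
    have hsub : ({a, b, c} : Set α) ⊆ s := by
      intro x hx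
      rcases hx with rfl | rfl | rfl
      · exact ha
      · exact hbs
      · exact hc
    have h3 : ({a, b, c} : Set α).encard = 3 := by
      rw [Set.encard_insert_of_notMem (by simp [hba.symm, Ne.symm hcab.1]),
        Set.encard_insert_of_notMem (by simp [Ne.symm hcab.2]), Set.encard_singleton]
      rfl
    have := Set.encard_mono hsub
    rw [h3] at this
    exact absurd (this.trans_lt h) (by norm_num)
  · push_neg at hb
    exact ⟨a, a, fun c hc => by simp [hb c hc]⟩

/-- Any graph isomorphic (via an explicit bijective enumeration) to the concrete
7-vertex graph given by `adjT` has metric dimension 3. -/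
theorem metricDim_of_model {V : Type*} (G : SimpleGraph V) (v : Fin 7 → V)
    (hv : Function.Bijective v)
    (hadj : ∀ i j, G.Adj (v i) (v j) ↔ adjT i j = true) : metricDim G = 3 := by
  have hinj := hv.1
  have hne : ∀ {i j : Fin 7}, i ≠ j → v i ≠ v j := fun h => fun he => h (hinj he)
  have hreach : ∀ i j : Fin 7, G.Reachable (v i) (v j) := by
    intro i j
    by_cases hij : i = j
    · subst hij; exact SimpleGraph.Reachable.refl _
    by_cases ha : adjT i j = true
    · exact ((hadj i j).2 ha).reachable
    · obtain ⟨k, hik, hjk⟩ := (by decide :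
        ∀ i j : Fin 7, i ≠ j → adjT i j = false →
          ∃ k, adjT i k = true ∧ adjT j k = true) i j hij (by simpa using ha)
      exact (((hadj i k).2 hik).reachable).trans (((hadj j k).2 hjk).reachable).symm
  have hdist : ∀ i j : Fin 7, i ≠ j →
      G.dist (v i) (v j) = if adjT i j then 1 else 2 := by
    intro i j hij
    by_cases ha : adjT i j = true
    · simp only [ha, if_true]
      exact SimpleGraph.dist_eq_one_iff_adj.2 ((hadj i j).2 ha)
    · have haf : adjT i j = false := by simpa using ha
      rw [haf]
      simp only [Bool.false_eq_true, if_false]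
      obtain ⟨k, hik, hjk⟩ := (by decide :
        ∀ i j : Fin 7, i ≠ j → adjT i j = false →
          ∃ k, adjT i k = true ∧ adjT j k = true) i j hij haf
      have hle : G.dist (v i) (v j) ≤ 2 := by
        simpa using SimpleGraph.dist_le
          (SimpleGraph.Walk.cons ((hadj i k).2 hik)
            (SimpleGraph.Walk.cons (((hadj j k).2 hjk).symm) SimpleGraph.Walk.nil))
      have h1 : 0 < G.dist (v i) (v j) :=
        (hreach i j).pos_dist_of_ne (hne hij)
      have h2 : G.dist (v i) (v j) ≠ 1 := by
        intro h
        exact ha ((hadj i j).1 (SimpleGraph.dist_eq_one_iff_adj.1 h))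
      omega
  have hdzero : ∀ i j : Fin 7, i ≠ j → G.dist (v i) (v j) ≠ 0 := by
    intro i j hij
    exact Nat.pos_iff_ne_zero.1 ((hreach i j).pos_dist_of_ne (hne hij))
  have hdistinguish : ∀ i j k : Fin 7,
      ((i = k ∧ j ≠ k) ∨ (j = k ∧ i ≠ k) ∨ (i ≠ k ∧ j ≠ k ∧ adjT i k ≠ adjT j k)) →
      G.dist (v i) (v k) ≠ G.dist (v j) (v k) := by
    rintro i j k (⟨rfl, hjk⟩ | ⟨rfl, hik⟩ | ⟨hik, hjk, hdiff⟩)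
    · rw [SimpleGraph.dist_self]
      exact fun h => hdzero _ _ hjk h.symm
    · rw [SimpleGraph.dist_self]
      exact hdzero _ _ hik
    · rw [hdist i k hik, hdist j k hjk]
      rcases Bool.eq_false_or_eq_true (adjT i k) with h | h <;>
        rcases Bool.eq_false_or_eq_true (adjT j k) with h' | h' <;>
          simp_all
  have hV : Nonempty V := ⟨v 0⟩
  set S : Set V := {v 0, v 1, v 2} with hS
  have hmemS : ∀ u : V, u ∈ S ↔ ∃ k : Fin 7, k.val < 3 ∧ u = v k := by
    intro u
    constructor
    · rintro (rfl | rfl | rfl)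
      exacts [⟨0, by norm_num⟩, ⟨1, by norm_num⟩, ⟨2, by norm_num⟩]
    · rintro ⟨k, hk, rfl⟩
      have : k = 0 ∨ k = 1 ∨ k = 2 :=
        (by decide : ∀ k : Fin 7, k.val < 3 → k = 0 ∨ k = 1 ∨ k = 2) k hk
      rcases this with rfl | rfl | rfl
      exacts [Set.mem_insert _ _, Set.mem_insert_of_mem _ (Set.mem_insert _ _),
        Set.mem_insert_of_mem _ (Set.mem_insert_of_mem _ rfl)]
  have hres : IsResolvingSet G S := by
    intro u w huw hnot
    obtain ⟨i, rfl⟩ := hv.2 u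
    obtain ⟨j, rfl⟩ := hv.2 w
    have hij : i ≠ j := fun h => huw (congrArg v h)
    have hij3 : ¬(i.val < 3 ∧ j.val < 3) := by
      intro ⟨hi, hj⟩
      exact hnot ⟨(hmemS _).2 ⟨i, hi, rfl⟩, (hmemS _).2 ⟨j, hj, rfl⟩⟩
    obtain ⟨k, hk3, hcond⟩ := (by decide :
      ∀ i j : Fin 7, i ≠ j → ¬(i.val < 3 ∧ j.val < 3) →
        ∃ k : Fin 7, k.val < 3 ∧
          ((i = k ∧ j ≠ k) ∨ (j = k ∧ i ≠ k) ∨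
            (i ≠ k ∧ j ≠ k ∧ adjT i k ≠ adjT j k))) i j hij hij3
    exact ⟨v k, (hmemS _).2 ⟨k, hk3, rfl⟩, hdistinguish i j k hcond⟩
  have hcard : S.encard = 3 := by
    rw [hS, Set.encard_insert_of_notMem (by
        simp only [Set.mem_insert_iff, Set.mem_singleton_iff, not_or]
        exact ⟨hne (by decide), hne (by decide)⟩),
      Set.encard_insert_of_notMem (by simp [hne (show (1:Fin 7) ≠ 2 by decide)]),
      Set.encard_singleton]
    rfl
  refine le_antisymm ?_ ?_
  · calc metricDim G ≤ S.encard := iInf_le (fun S : {S : Set V // IsResolvingSet G S} => (S : Set V).encard) ⟨S, hres⟩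
    _ = 3 := hcard
  · rw [metricDim, le_iInf_iff]
    rintro ⟨T, hT⟩
    by_contra hlt
    push_neg at hlt
    obtain ⟨a, b, hTab⟩ := subset_pair_of_encard_lt_three hlt
    obtain ⟨i₀, rfl⟩ := hv.2 a
    obtain ⟨j₀, rfl⟩ := hv.2 b
    obtain ⟨i, j, hij, hii₀, hij₀, hji₀, hjj₀, he1, he2⟩ := (by decide :
      ∀ a b : Fin 7, ∃ i j : Fin 7, i ≠ j ∧ i ≠ a ∧ i ≠ b ∧ j ≠ a ∧ j ≠ b ∧
        adjT i a = adjT j a ∧ adjT i b = adjT j b) i₀ j₀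
    have hiT : v i ∉ T := by
      intro h
      rcases hTab h with h | h
      · exact hii₀ (hinj h)
      · exact hij₀ (hinj h)
    obtain ⟨w, hwT, hwd⟩ := hT (v i) (v j) (hne hij) (fun h => hiT h.1)
    rcases hTab hwT with rfl | rfl
    · rw [hdist i i₀ hii₀, hdist j i₀ hji₀, he1] at hwd
      exact hwd rfl
    · rw [hdist i j₀ hij₀, hdist j j₀ hjj₀, he2] at hwd
      exact hwd rfl

/-! ### Auxiliary ring-theoretic material -/

section RingAux

/-- Evaluation lemmas for 7-vectors. -/
lemma vec7_eval0 {α : Type*} (a0 a1 a2 a3 a4 a5 a6 : α) : ![a0,a1,a2,a3,a4,a5,a6] 0 = a0 := rfl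
lemma vec7_eval1 {α : Type*} (a0 a1 a2 a3 a4 a5 a6 : α) : ![a0,a1,a2,a3,a4,a5,a6] 1 = a1 := rfl
lemma vec7_eval2 {α : Type*} (a0 a1 a2 a3 a4 a5 a6 : α) : ![a0,a1,a2,a3,a4,a5,a6] 2 = a2 := rfl
lemma vec7_eval3 {α : Type*} (a0 a1 a2 a3 a4 a5 a6 : α) : ![a0,a1,a2,a3,a4,a5,a6] 3 = a3 := rfl
lemma vec7_eval4 {α : Type*} (a0 a1 a2 a3 a4 a5 a6 : α) : ![a0,a1,a2,a3,a4,a5,a6] 4 = a4 := rfl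
lemma vec7_eval5 {α : Type*} (a0 a1 a2 a3 a4 a5 a6 : α) : ![a0,a1,a2,a3,a4,a5,a6] 5 = a5 := rfl
lemma vec7_eval6 {α : Type*} (a0 a1 a2 a3 a4 a5 a6 : α) : ![a0,a1,a2,a3,a4,a5,a6] 6 = a6 := rfl

variable {A B : Type*} [CommRing A] [CommRing B]

/-- The seven ideal pairs indexing the vertices of the model. -/
def Pvec (M₁ : Ideal A) (M₂ : Ideal B) : Fin 7 → Ideal A × Ideal B :=
  ![(⊥, M₂), (⊥, ⊤), (M₁, ⊥), (M₁, M₂), (M₁, ⊤), (⊤, ⊥), (⊤, M₂)]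

lemma Pvec_0 (M₁ : Ideal A) (M₂ : Ideal B) : Pvec M₁ M₂ 0 = (⊥, M₂) := rfl
lemma Pvec_1 (M₁ : Ideal A) (M₂ : Ideal B) : Pvec M₁ M₂ 1 = (⊥, ⊤) := rfl
lemma Pvec_2 (M₁ : Ideal A) (M₂ : Ideal B) : Pvec M₁ M₂ 2 = (M₁, ⊥) := rfl
lemma Pvec_3 (M₁ : Ideal A) (M₂ : Ideal B) : Pvec M₁ M₂ 3 = (M₁, M₂) := rfl
lemma Pvec_4 (M₁ : Ideal A) (M₂ : Ideal B) : Pvec M₁ M₂ 4 = (M₁, ⊤) := rfl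
lemma Pvec_5 (M₁ : Ideal A) (M₂ : Ideal B) : Pvec M₁ M₂ 5 = (⊤, ⊥) := rfl
lemma Pvec_6 (M₁ : Ideal A) (M₂ : Ideal B) : Pvec M₁ M₂ 6 = (⊤, M₂) := rfl

lemma prod_sup_prod' (a c : Ideal A) (b d : Ideal B) :
    Ideal.prod a b ⊔ Ideal.prod c d = Ideal.prod (a ⊔ c) (b ⊔ d) := by
  refine le_antisymm (sup_le ?_ ?_) ?_
  · rintro ⟨x, y⟩ ⟨hx, hy⟩
    exact ⟨Submodule.mem_sup_left hx, Submodule.mem_sup_left hy⟩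
  · rintro ⟨x, y⟩ ⟨hx, hy⟩
    exact ⟨Submodule.mem_sup_right hx, Submodule.mem_sup_right hy⟩
  · rintro ⟨x, y⟩ ⟨hx, hy⟩
    obtain ⟨xa, hxa, xc, hxc, rfl⟩ := Submodule.mem_sup.1 hx
    obtain ⟨yb, hyb, yd, hyd, rfl⟩ := Submodule.mem_sup.1 hy
    have h1 : ((xa, yb) : A × B) ∈ Ideal.prod a b := ⟨hxa, hyb⟩
    have h2 : ((xc, yd) : A × B) ∈ Ideal.prod c d := ⟨hxc, hyd⟩
    exact Submodule.add_mem_sup h1 h2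

lemma prod_eq_bot_iff' {a : Ideal A} {b : Ideal B} :
    Ideal.prod a b = ⊥ ↔ a = ⊥ ∧ b = ⊥ := by
  constructor
  · intro h
    constructor
    · refine (Submodule.eq_bot_iff _).2 fun x hx => ?_
      have : ((x, 0) : A × B) ∈ Ideal.prod a b := ⟨hx, b.zero_mem⟩
      rw [h] at this
      simpa [Prod.ext_iff] using this
    · refine (Submodule.eq_bot_iff _).2 fun y hy => ?_
      have : ((0, y) : A × B) ∈ Ideal.prod a b := ⟨a.zero_mem, hy⟩
      rw [h] at this
      simpa [Prod.ext_iff] using this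
  · rintro ⟨rfl, rfl⟩
    refine (Submodule.eq_bot_iff _).2 ?_
    rintro ⟨x, y⟩ ⟨hx, hy⟩
    simp_all [Prod.ext_iff, Ideal.mem_bot]

lemma prod_eq_top_iff' {a : Ideal A} {b : Ideal B} :
    Ideal.prod a b = ⊤ ↔ a = ⊤ ∧ b = ⊤ := by
  constructor
  · intro h
    have h1 : ((1, 1) : A × B) ∈ Ideal.prod a b := by rw [h]; trivial
    exact ⟨(Ideal.eq_top_iff_one _).2 h1.1, (Ideal.eq_top_iff_one _).2 h1.2⟩
  · rintro ⟨rfl, rfl⟩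
    exact Ideal.prod_top_top

/-- In a ring with a unique nonzero proper ideal, the zero ideal is not prime. -/
lemma bot_not_isPrime_of_unique {M : Ideal A} (hMb : M ≠ ⊥) (hMt : M ≠ ⊤)
    (hu : ∀ I : Ideal A, I ≠ ⊥ ∧ I ≠ ⊤ → I = M) : ¬(⊥ : Ideal A).IsPrime := by
  intro hp
  obtain ⟨x, hxM, hx0⟩ := Submodule.exists_mem_ne_zero_of_ne_bot hMb
  have hspan : ∀ y : A, y ∈ M → y ≠ 0 → Ideal.span {y} = M := by
    intro y hyM hy0
    refine hu _ ⟨?_, ?_⟩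
    · rw [Ne, Ideal.span_singleton_eq_bot]; exact hy0
    · intro h
      exact hMt (top_le_iff.1 (h ▸ (Ideal.span_singleton_le_iff_mem _).2 hyM))
  have hx2 : x * x ≠ 0 := by
    intro h
    rcases hp.mem_or_mem (show x * x ∈ (⊥ : Ideal A) from h) with h' | h' <;>
      exact hx0 (Ideal.mem_bot.1 h')
  have hxx : Ideal.span {x * x} = M := hspan _ (M.mul_mem_left x hxM) hx2
  have hxmem : x ∈ Ideal.span {x * x} := by rw [hxx]; exact hxM
  obtain ⟨c, hc⟩ := Ideal.mem_span_singleton'.1 hxmem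
  have hzero : (c * x - 1) * x = 0 := by
    rw [sub_mul, one_mul, sub_eq_zero, mul_assoc]
    exact hc
  rcases hp.mem_or_mem (show (c * x - 1) * x ∈ (⊥ : Ideal A) from hzero) with h' | h'
  · have h1 : c * x - 1 = 0 := Ideal.mem_bot.1 h'
    have hcx : c * x = 1 := by rwa [sub_eq_zero] at h1
    have : (1 : A) ∈ M := hcx ▸ M.mul_mem_left c hxM
    exact hMt ((Ideal.eq_top_iff_one _).2 this)
  · exact hx0 (Ideal.mem_bot.1 h')

end RingAux

set_option maxHeartbeats 1000000

/-- If `R` is isomorphic to a product of two rings each having exactly one nonzero proper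
ideal, then the metric dimension of `PIS R` equals 3. -/
theorem metricDim_PIS_two_factors {R R₁ R₂ : Type*} [CommRing R] [CommRing R₁] [CommRing R₂]
    (h₁ : ∃! I : Ideal R₁, I ≠ ⊥ ∧ I ≠ ⊤) (h₂ : ∃! I : Ideal R₂, I ≠ ⊥ ∧ I ≠ ⊤)
    (e : R ≃+* (R₁ × R₂)) :
    metricDim (PIS R) = 3 := by
  obtain ⟨M₁, ⟨hM₁b, hM₁t⟩, hu₁'⟩ := h₁
  obtain ⟨M₂, ⟨hM₂b, hM₂t⟩, hu₂'⟩ := h₂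
  have hu₁ : ∀ I : Ideal R₁, I ≠ ⊥ ∧ I ≠ ⊤ → I = M₁ := fun I h => hu₁' I h
  have hu₂ : ∀ I : Ideal R₂, I ≠ ⊥ ∧ I ≠ ⊤ → I = M₂ := fun I h => hu₂' I h
  have hbt₁ : (⊥ : Ideal R₁) ≠ ⊤ := fun h => hM₁b (eq_bot_iff.2 (h ▸ le_top))
  have hbt₂ : (⊥ : Ideal R₂) ≠ ⊤ := fun h => hM₂b (eq_bot_iff.2 (h ▸ le_top))
  have hclass₁ : ∀ I : Ideal R₁, I = ⊥ ∨ I = M₁ ∨ I = ⊤ := by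
    intro I
    by_cases hb : I = ⊥
    · exact Or.inl hb
    by_cases ht : I = ⊤
    · exact Or.inr (Or.inr ht)
    · exact Or.inr (Or.inl (hu₁ I ⟨hb, ht⟩))
  have hclass₂ : ∀ I : Ideal R₂, I = ⊥ ∨ I = M₂ ∨ I = ⊤ := by
    intro I
    by_cases hb : I = ⊥
    · exact Or.inl hb
    by_cases ht : I = ⊤
    · exact Or.inr (Or.inr ht)
    · exact Or.inr (Or.inl (hu₂ I ⟨hb, ht⟩))
  -- M₁, M₂ are maximal, hence prime; and they are the only primes
  have hmax₁ : M₁.IsMaximal := by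
    rw [Ideal.isMaximal_def]
    refine ⟨hM₁t, fun I hI => ?_⟩
    rcases hclass₁ I with rfl | rfl | rfl
    · exact absurd hI (by simp)
    · exact absurd hI (lt_irrefl _)
    · rfl
  have hmax₂ : M₂.IsMaximal := by
    rw [Ideal.isMaximal_def]
    refine ⟨hM₂t, fun I hI => ?_⟩
    rcases hclass₂ I with rfl | rfl | rfl
    · exact absurd hI (by simp)
    · exact absurd hI (lt_irrefl _)
    · rfl
  have hp₁ : ∀ I : Ideal R₁, I.IsPrime ↔ I = M₁ := by
    intro I
    constructor
    · intro hI
      rcases hclass₁ I with rfl | rfl | rfl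
      · exact absurd hI (bot_not_isPrime_of_unique hM₁b hM₁t hu₁)
      · rfl
      · exact absurd rfl hI.ne_top
    · rintro rfl
      exact hmax₁.isPrime
  have hp₂ : ∀ I : Ideal R₂, I.IsPrime ↔ I = M₂ := by
    intro I
    constructor
    · intro hI
      rcases hclass₂ I with rfl | rfl | rfl
      · exact absurd hI (bot_not_isPrime_of_unique hM₂b hM₂t hu₂)
      · rfl
      · exact absurd rfl hI.ne_top
    · rintro rfl
      exact hmax₂.isPrime
  -- transfer of ideals along e
  have hkey : ∀ I : Ideal (R₁ × R₂), Ideal.comap e.symm (Ideal.comap e I) = I := by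
    intro I
    ext x
    simp only [Ideal.mem_comap, RingEquiv.coe_toRingHom, RingEquiv.apply_symm_apply]
  have hkey2 : ∀ I : Ideal R, Ideal.comap e (Ideal.comap e.symm I) = I := by
    intro I
    ext x
    simp only [Ideal.mem_comap, RingEquiv.coe_toRingHom, RingEquiv.symm_apply_apply]
  have hcinj : Function.Injective (Ideal.comap (e : R ≃+* R₁ × R₂) :
      Ideal (R₁ × R₂) → Ideal R) := by
    intro I J h
    rw [← hkey I, h, hkey]
  have hcsup : ∀ I J : Ideal (R₁ × R₂),
      Ideal.comap e I ⊔ Ideal.comap e J = Ideal.comap e (I ⊔ J) := by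
    intro I J
    rw [← Ideal.map_symm, ← Ideal.map_symm, ← Ideal.map_symm, Ideal.map_sup]
  have hcbot : Ideal.comap (e : R ≃+* R₁ × R₂) (⊥ : Ideal (R₁ × R₂)) = ⊥ := by
    ext x
    simp [Ideal.mem_comap]
  have hctop : Ideal.comap (e : R ≃+* R₁ × R₂) (⊤ : Ideal (R₁ × R₂)) = ⊤ :=
    Ideal.comap_top
  have hcprime : ∀ I : Ideal (R₁ × R₂), (Ideal.comap e I).IsPrime ↔ I.IsPrime := by
    intro I
    constructor
    · intro h
      haveI := h
      exact hkey I ▸ Ideal.comap_isPrime e.symm (Ideal.comap e I)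
    · intro h
      exact Ideal.comap_isPrime e I
  -- the ideal-pair picture
  set Φ : Ideal R₁ → Ideal R₂ → Ideal R := fun a b => Ideal.comap e (Ideal.prod a b) with hΦ
  have hΦeq : ∀ a c : Ideal R₁, ∀ b d : Ideal R₂, Φ a b = Φ c d ↔ a = c ∧ b = d := by
    intro a c b d
    constructor
    · intro h
      exact Ideal.prod_inj.1 (hcinj h)
    · rintro ⟨rfl, rfl⟩
      rfl
  have hΦbot : ∀ (a : Ideal R₁) (b : Ideal R₂), Φ a b = ⊥ ↔ a = ⊥ ∧ b = ⊥ := by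
    intro a b
    simp only [hΦ]
    constructor
    · intro h
      exact prod_eq_bot_iff'.1 (hcinj (by rw [h, hcbot]))
    · rintro ⟨rfl, rfl⟩
      rw [prod_eq_bot_iff'.2 ⟨rfl, rfl⟩, hcbot]
  have hΦtop : ∀ (a : Ideal R₁) (b : Ideal R₂), Φ a b = ⊤ ↔ a = ⊤ ∧ b = ⊤ := by
    intro a b
    simp only [hΦ]
    constructor
    · intro h
      exact prod_eq_top_iff'.1 (hcinj (by rw [h, hctop]))
    · rintro ⟨rfl, rfl⟩
      rw [prod_eq_top_iff'.2 ⟨rfl, rfl⟩, hctop]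
  have hΦsup : ∀ (a c : Ideal R₁) (b d : Ideal R₂),
      Φ a b ⊔ Φ c d = Φ (a ⊔ c) (b ⊔ d) := by
    intro a c b d
    simp only [hΦ]
    rw [hcsup, prod_sup_prod']
  have hΦprime : ∀ (a : Ideal R₁) (b : Ideal R₂),
      (Φ a b).IsPrime ↔ ((a = M₁ ∧ b = ⊤) ∨ (a = ⊤ ∧ b = M₂)) := by
    intro a b
    simp only [hΦ]
    rw [hcprime, Ideal.ideal_prod_prime]
    constructor
    · rintro (⟨p, hp, hpe⟩ | ⟨p, hp, hpe⟩)
      · obtain ⟨h1, h2⟩ := Ideal.prod_inj.1 hpe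
        exact Or.inl ⟨h1.trans ((hp₁ p).1 hp), h2⟩
      · obtain ⟨h1, h2⟩ := Ideal.prod_inj.1 hpe
        exact Or.inr ⟨h1, h2.trans ((hp₂ p).1 hp)⟩
    · rintro (⟨h1, h2⟩ | ⟨h1, h2⟩)
      · exact Or.inl ⟨M₁, hmax₁.isPrime, by rw [h1, h2]⟩
      · exact Or.inr ⟨M₂, hmax₂.isPrime, by rw [h1, h2]⟩
  -- the seven vertices
  have hPne : ∀ i : Fin 7, Φ (Pvec M₁ M₂ i).1 (Pvec M₁ M₂ i).2 ≠ ⊥ ∧ Φ (Pvec M₁ M₂ i).1 (Pvec M₁ M₂ i).2 ≠ ⊤ := by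
    intro i
    constructor
    · rw [Ne, hΦbot]
      fin_cases i <;>
        simp [Pvec_0, Pvec_1, Pvec_2, Pvec_3, Pvec_4, Pvec_5, Pvec_6, hM₁b, hM₁t, hM₂b, hM₂t, hbt₁, hbt₂,
          Ne.symm hbt₁, Ne.symm hbt₂]
    · rw [Ne, hΦtop]
      fin_cases i <;>
        simp [Pvec_0, Pvec_1, Pvec_2, Pvec_3, Pvec_4, Pvec_5, Pvec_6, hM₁b, hM₁t, hM₂b, hM₂t, hbt₁, hbt₂,
          Ne.symm hbt₁, Ne.symm hbt₂]
  set vmap : Fin 7 → PISVertex R := fun i => ⟨Φ (Pvec M₁ M₂ i).1 (Pvec M₁ M₂ i).2, hPne i⟩ with hvmap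
  have hPinj : ∀ i j : Fin 7, (Pvec M₁ M₂ i).1 = (Pvec M₁ M₂ j).1 → (Pvec M₁ M₂ i).2 = (Pvec M₁ M₂ j).2 → i = j := by
    intro i j
    fin_cases i <;> fin_cases j <;>
      simp [Pvec_0, Pvec_1, Pvec_2, Pvec_3, Pvec_4, Pvec_5, Pvec_6, hM₁b, hM₁t, hM₂b, hM₂t, hbt₁, hbt₂,
        Ne.symm hM₁b, Ne.symm hM₁t, Ne.symm hM₂b, Ne.symm hM₂t, Ne.symm hbt₁, Ne.symm hbt₂]
  have hinj : Function.Injective vmap := by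
    intro i j h
    have h' : Φ (Pvec M₁ M₂ i).1 (Pvec M₁ M₂ i).2 = Φ (Pvec M₁ M₂ j).1 (Pvec M₁ M₂ j).2 := congrArg Subtype.val h
    obtain ⟨h1, h2⟩ := (hΦeq _ _ _ _).1 h'
    exact hPinj i j h1 h2
  have hsurj : Function.Surjective vmap := by
    rintro ⟨I, hIb, hIt⟩
    have hIJ : I = Ideal.comap e (Ideal.comap e.symm I) := (hkey2 I).symm
    have hJab : Ideal.comap e.symm I =
        Ideal.prod (Ideal.map (RingHom.fst R₁ R₂) (Ideal.comap e.symm I))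
          (Ideal.map (RingHom.snd R₁ R₂) (Ideal.comap e.symm I)) :=
      Ideal.ideal_prod_eq _
    set a := Ideal.map (RingHom.fst R₁ R₂) (Ideal.comap e.symm I) with ha
    set b := Ideal.map (RingHom.snd R₁ R₂) (Ideal.comap e.symm I) with hb
    have hIab : I = Φ a b := by
      show I = Ideal.comap e (Ideal.prod a b)
      rw [← hJab, ← hIJ]
    have hvi : ∀ (i : Fin 7), (Pvec M₁ M₂ i).1 = a → (Pvec M₁ M₂ i).2 = b →
        vmap i = ⟨I, hIb, hIt⟩ := by
      intro i h1 h2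
      apply Subtype.ext
      show Φ (Pvec M₁ M₂ i).1 (Pvec M₁ M₂ i).2 = I
      rw [h1, h2, hIab]
    rcases hclass₁ a with h1 | h1 | h1 <;> rcases hclass₂ b with h2 | h2 | h2
    · exact absurd (hIab.trans ((hΦbot a b).2 ⟨h1, h2⟩)) hIb
    · exact ⟨0, hvi 0 (by rw [Pvec_0, h1]) (by rw [Pvec_0, h2])⟩
    · exact ⟨1, hvi 1 (by rw [Pvec_1, h1]) (by rw [Pvec_1, h2])⟩
    · exact ⟨2, hvi 2 (by rw [Pvec_2, h1]) (by rw [Pvec_2, h2])⟩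
    · exact ⟨3, hvi 3 (by rw [Pvec_3, h1]) (by rw [Pvec_3, h2])⟩
    · exact ⟨4, hvi 4 (by rw [Pvec_4, h1]) (by rw [Pvec_4, h2])⟩
    · exact ⟨5, hvi 5 (by rw [Pvec_5, h1]) (by rw [Pvec_5, h2])⟩
    · exact ⟨6, hvi 6 (by rw [Pvec_6, h1]) (by rw [Pvec_6, h2])⟩
    · exact absurd (hIab.trans ((hΦtop a b).2 ⟨h1, h2⟩)) hIt
  have hadj : ∀ i j, (PIS R).Adj (vmap i) (vmap j) ↔ adjT i j = true := by
    intro i j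
    have hne' : (vmap i ≠ vmap j) ↔ i ≠ j :=
      ⟨fun h hij => h (congrArg vmap hij), fun h he => h (hinj he)⟩
    have hA : (PIS R).Adj (vmap i) (vmap j) ↔
        (i ≠ j ∧ (((Pvec M₁ M₂ i).1 ⊔ (Pvec M₁ M₂ j).1 = M₁ ∧ (Pvec M₁ M₂ i).2 ⊔ (Pvec M₁ M₂ j).2 = ⊤) ∨
          ((Pvec M₁ M₂ i).1 ⊔ (Pvec M₁ M₂ j).1 = ⊤ ∧ (Pvec M₁ M₂ i).2 ⊔ (Pvec M₁ M₂ j).2 = M₂))) := by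
      show (vmap i ≠ vmap j ∧ (Φ (Pvec M₁ M₂ i).1 (Pvec M₁ M₂ i).2 + Φ (Pvec M₁ M₂ j).1 (Pvec M₁ M₂ j).2).IsPrime) ↔ _
      rw [hne', Submodule.add_eq_sup, hΦsup, hΦprime]
    rw [hA]
    fin_cases i <;> fin_cases j <;>
      simp [adjT, Pvec_0, Pvec_1, Pvec_2, Pvec_3, Pvec_4, Pvec_5, Pvec_6, hM₁b, hM₁t, hM₂b, hM₂t, hbt₁, hbt₂,
        Ne.symm hM₁b, Ne.symm hM₁t, Ne.symm hM₂b, Ne.symm hM₂t, Ne.symm hbt₁, Ne.symm hbt₂] <;>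
      decide
  exact metricDim_of_model (PIS R) vmap ⟨hinj, hsurj⟩ hadj
end

section
/- Let R ≅ R₁ × R₂ × R₃, where R₁, R₂, R₃ are commutative rings with identity each having exactly one nonzero proper ideal. Then the metric dimension of the prime ideal sum graph PIS(R) equals 5. -/
open scoped Classical

/-! ### Auxiliary: the concrete model graph -/

open SimpleGraph

abbrev F3 := Fin 3 × Fin 3 × Fin 3
abbrev V0 := {v : F3 // v ≠ ⊥ ∧ v ≠ ⊤}

def adj0 (a b : F3) : Prop :=
  a ≠ b ∧ (a ⊔ b = (1,2,2) ∨ a ⊔ b = (2,1,2) ∨ a ⊔ b = (2,2,1))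

instance : DecidableRel adj0 := fun a b => inferInstanceAs (Decidable (_ ∧ _))

def G0 : SimpleGraph V0 where
  Adj a b := adj0 a.1 b.1
  symm := by
    refine ⟨?_⟩
    rintro a b ⟨h1, h2⟩
    refine ⟨fun hh => h1 hh.symm, ?_⟩
    rwa [sup_comm]
  loopless := ⟨fun a h => h.1 rfl⟩

instance : DecidableRel G0.Adj := fun a b => inferInstanceAs (Decidable (adj0 a.1 b.1))

lemma common_nbr : ∀ u v : V0, u = v ∨ adj0 u.1 v.1 ∨
    ∃ w : V0, adj0 u.1 w.1 ∧ adj0 w.1 v.1 := by decide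

def D (u v : V0) : ℕ := if u = v then 0 else if adj0 u.1 v.1 then 1 else 2

lemma G0_dist (u v : V0) : G0.dist u v = D u v := by
  unfold D
  split_ifs with h1 h2
  · subst h1; exact SimpleGraph.dist_self
  · exact SimpleGraph.dist_eq_one_iff_adj.2 h2
  · rcases common_nbr u v with h | h | ⟨w, hw1, hw2⟩
    · exact absurd h h1
    · exact absurd h h2
    · let p : G0.Walk u v := Walk.cons (hw1 : G0.Adj u w) (Walk.cons (hw2 : G0.Adj w v) Walk.nil)
      have hle : G0.dist u v ≤ 2 := by
        have hl := SimpleGraph.dist_le p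
        simp only [p, SimpleGraph.Walk.length_cons, SimpleGraph.Walk.length_nil] at hl
        exact le_trans hl (le_of_eq rfl)
      have h0 : G0.dist u v ≠ 0 := by
        rw [Ne, SimpleGraph.dist_eq_zero_iff_eq_or_not_reachable]
        push_neg
        exact ⟨h1, ⟨p⟩⟩
      have hne1 : G0.dist u v ≠ 1 := fun hh => h2 (SimpleGraph.dist_eq_one_iff_adj.1 hh)
      omega

def s1 : V0 := ⟨(0,2,2), by decide⟩
def s2 : V0 := ⟨(1,1,2), by decide⟩
def s3 : V0 := ⟨(1,2,1), by decide⟩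
def s4 : V0 := ⟨(2,0,2), by decide⟩
def s5 : V0 := ⟨(2,2,0), by decide⟩

def S5 : Finset V0 := {s1, s2, s3, s4, s5}

lemma S5_card : S5.card = 5 := by decide

lemma S5_resolves : ∀ u v : V0, u = v ∨ ∃ w ∈ S5, D u w ≠ D v w := by decide

lemma S5_resolving : IsResolvingSet G0 ↑S5 := by
  intro u v hne _
  rcases S5_resolves u v with h | ⟨w, hw, hD⟩
  · exact absurd h hne
  · exact ⟨w, by exact_mod_cast hw, by rw [G0_dist, G0_dist]; exact hD⟩

lemma card_V0 : Fintype.card V0 = 25 := by decide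

lemma G0_lower (S : Set V0) (hS : IsResolvingSet G0 S) : 5 ≤ S.encard := by
  by_contra hlt
  push_neg at hlt
  have hfin : S.Finite := Set.encard_lt_top_iff.1 (lt_of_lt_of_le hlt le_top)
  set T : Finset V0 := hfin.toFinset with hT
  have hTS : ∀ x, x ∈ T ↔ x ∈ S := fun x => hfin.mem_toFinset
  have hcardT : (T.card : ℕ∞) < 5 := by
    rwa [← Set.Finite.encard_eq_coe_toFinset_card hfin]
  have hT4 : T.card ≤ 4 := by exact_mod_cast Order.lt_succ_iff.mp (by exact_mod_cast hcardT)
  have hmaps : ∀ a ∈ Tᶜ, (fun w : ↥T => decide (adj0 a.1 (w : V0).1)) ∈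
      (Finset.univ : Finset (↥T → Bool)) := fun a _ => Finset.mem_univ _
  have hcardlt : (Finset.univ : Finset (↥T → Bool)).card < Tᶜ.card := by
    rw [Finset.card_univ, Fintype.card_fun, Fintype.card_coe, Fintype.card_bool,
      Finset.card_compl, card_V0]
    have h2 : 2 ^ T.card ≤ 2 ^ 4 := Nat.pow_le_pow_right (by norm_num) hT4
    omega
  obtain ⟨u, hu, v, hv, huv, hfeq⟩ :=
    Finset.exists_ne_map_eq_of_card_lt_of_maps_to hcardlt hmaps
  have hu' : u ∉ S := fun h => (Finset.mem_compl.1 hu) ((hTS u).2 h)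
  have hv' : v ∉ S := fun h => (Finset.mem_compl.1 hv) ((hTS v).2 h)
  obtain ⟨w, hwS, hdist⟩ := hS u v huv (by tauto)
  have hwT : w ∈ T := (hTS w).2 hwS
  apply hdist
  rw [G0_dist, G0_dist]
  have hb := congrFun hfeq ⟨w, hwT⟩
  simp only [decide_eq_decide] at hb
  unfold D
  have hu_ne : ¬ (u = w) := fun h => hu' (h ▸ hwS)
  have hv_ne : ¬ (v = w) := fun h => hv' (h ▸ hwS)
  simp only [hu_ne, hv_ne, if_false]
  by_cases ha : adj0 u.1 w.1
  · rw [if_pos ha, if_pos (hb.1 ha)]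
  · rw [if_neg ha, if_neg (fun h => ha (hb.2 h))]

lemma S5_encard : (↑S5 : Set V0).encard = 5 := by
  rw [Set.encard_coe_eq_coe_finsetCard, S5_card]; rfl

lemma metricDim_G0 : metricDim G0 = 5 := by
  apply le_antisymm
  · exact iInf_le_of_le ⟨↑S5, S5_resolving⟩ (le_of_eq S5_encard)
  · exact le_iInf fun S => G0_lower S.1 S.2

/-! ### Auxiliary: transport of the metric dimension along graph isomorphisms -/

section Transport

variable {V W : Type*} {G : SimpleGraph V} {H : SimpleGraph W}

lemma iso_dist_le (φ : G ≃g H) (u v : V) : H.dist (φ u) (φ v) ≤ G.dist u v := by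
  by_cases hr : G.Reachable u v
  · obtain ⟨p, hp⟩ := hr.exists_walk_length_eq_dist
    calc H.dist (φ u) (φ v) ≤ (p.map φ.toHom).length := SimpleGraph.dist_le _
      _ = G.dist u v := by rw [SimpleGraph.Walk.length_map, hp]
  · have hr' : ¬ H.Reachable (φ u) (φ v) := fun h => hr (by
      have := h.map φ.symm.toHom
      simpa using this)
    rw [SimpleGraph.dist_eq_zero_of_not_reachable hr,
      SimpleGraph.dist_eq_zero_of_not_reachable hr']

lemma iso_dist_eq (φ : G ≃g H) (u v : V) : H.dist (φ u) (φ v) = G.dist u v := by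
  refine le_antisymm (iso_dist_le φ u v) ?_
  have := iso_dist_le φ.symm (φ u) (φ v)
  simpa using this

lemma isResolving_image (φ : G ≃g H) {S : Set V} (hS : IsResolvingSet G S) :
    IsResolvingSet H (φ '' S) := by
  intro u v hne hmem
  obtain ⟨w, hwS, hd⟩ := hS (φ.symm u) (φ.symm v)
    (fun h => hne (by simpa using congrArg φ h))
    (fun ⟨h1, h2⟩ => hmem ⟨⟨_, h1, by simp⟩, ⟨_, h2, by simp⟩⟩)
  refine ⟨φ w, ⟨w, hwS, rfl⟩, ?_⟩
  have e1 : H.dist u (φ w) = G.dist (φ.symm u) w := by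
    conv_lhs => rw [show u = φ (φ.symm u) by simp]
    exact iso_dist_eq φ _ _
  have e2 : H.dist v (φ w) = G.dist (φ.symm v) w := by
    conv_lhs => rw [show v = φ (φ.symm v) by simp]
    exact iso_dist_eq φ _ _
  rw [e1, e2]; exact hd

lemma metricDim_le_of_iso (φ : G ≃g H) : metricDim H ≤ metricDim G := by
  refine le_iInf fun ⟨S, hS⟩ => ?_
  refine iInf_le_of_le ⟨φ '' S, isResolving_image φ hS⟩ ?_
  exact le_of_eq ((φ.toEquiv.injective.injOn).encard_image)

lemma metricDim_iso_eq (φ : G ≃g H) : metricDim G = metricDim H :=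
  le_antisymm (metricDim_le_of_iso φ.symm) (metricDim_le_of_iso φ)

end Transport

/-! ### Auxiliary: rings with exactly one nonzero proper ideal -/

section OneIdeal

variable {A : Type*} [CommRing A] (h : ∃! I : Ideal A, I ≠ ⊥ ∧ I ≠ ⊤)
include h

noncomputable def MM : Ideal A := h.choose

lemma MM_ne_bot : MM h ≠ ⊥ := h.choose_spec.1.1
lemma MM_ne_top : MM h ≠ ⊤ := h.choose_spec.1.2
lemma eq_MM {I : Ideal A} (h1 : I ≠ ⊥) (h2 : I ≠ ⊤) : I = MM h := h.choose_spec.2 I ⟨h1, h2⟩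

lemma ideal_cases (I : Ideal A) : I = ⊥ ∨ I = MM h ∨ I = ⊤ := by
  by_cases h1 : I = ⊥
  · exact Or.inl h1
  by_cases h2 : I = ⊤
  · exact Or.inr (Or.inr h2)
  exact Or.inr (Or.inl (eq_MM h h1 h2))

lemma bot_ne_top' : (⊥ : Ideal A) ≠ ⊤ := by
  intro hbt
  exact MM_ne_bot h (le_antisymm (hbt ▸ le_top) bot_le)

lemma MM_isMaximal : (MM h).IsMaximal := by
  refine ⟨⟨MM_ne_top h, fun J hJ => ?_⟩⟩
  rcases ideal_cases h J with rfl | rfl | rfl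
  · exact absurd (lt_of_le_of_lt bot_le hJ) (lt_irrefl _)
  · exact absurd hJ (lt_irrefl _)
  · rfl

lemma bot_not_prime : ¬ (⊥ : Ideal A).IsPrime := by
  intro hp
  obtain ⟨x, hxM, hx0⟩ := Submodule.exists_mem_ne_zero_of_ne_bot (MM_ne_bot h)
  have hsq : Ideal.span {x * x} ≤ MM h := by
    rw [Ideal.span_singleton_le_iff_mem]
    exact Ideal.mul_mem_left _ x hxM
  by_cases hb : Ideal.span {x * x} = (⊥ : Ideal A)
  · rw [Ideal.span_singleton_eq_bot] at hb
    rcases hp.mem_or_mem (show x * x ∈ (⊥ : Ideal A) from Ideal.mem_bot.2 hb) with h1 | h1 <;>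
      exact hx0 (Ideal.mem_bot.1 h1)
  · have ht : Ideal.span {x * x} ≠ ⊤ := fun ht => MM_ne_top h (top_le_iff.1 (ht ▸ hsq))
    have hMs : Ideal.span {x * x} = MM h := eq_MM h hb ht
    have hxmem : x ∈ Ideal.span {x * x} := hMs ▸ hxM
    rw [Ideal.mem_span_singleton] at hxmem
    obtain ⟨c, hc⟩ := hxmem
    have hz : x * (1 - x * c) = 0 := by linear_combination hc
    rcases hp.mem_or_mem (show x * (1 - x * c) ∈ (⊥ : Ideal A) from Ideal.mem_bot.2 hz) with
      h1 | h1
    · exact hx0 (Ideal.mem_bot.1 h1)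
    · have h2 : x * c = 1 := (sub_eq_zero.1 (Ideal.mem_bot.1 h1)).symm
      exact MM_ne_top h (Ideal.eq_top_of_isUnit_mem _ hxM (IsUnit.of_mul_eq_one c h2))

lemma prime_iff (I : Ideal A) : I.IsPrime ↔ I = MM h := by
  constructor
  · intro hp
    rcases ideal_cases h I with rfl | hI | rfl
    · exact absurd hp (bot_not_prime h)
    · exact hI
    · exact absurd rfl hp.ne_top
  · rintro rfl
    exact (MM_isMaximal h).isPrime

noncomputable def psi : Ideal A ≃o Fin 3 :=
  Equiv.toOrderIso
    { toFun := fun I => if I = ⊥ then 0 else if I = ⊤ then 2 else 1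
      invFun := fun j => if j = 0 then ⊥ else if j = 2 then ⊤ else MM h
      left_inv := by
        intro I
        rcases ideal_cases h I with rfl | rfl | rfl
        · simp
        · simp [MM_ne_bot h, MM_ne_top h]
        · simp [(bot_ne_top' h).symm]
      right_inv := by
        intro j
        fin_cases j
        · simp
        · simp [MM_ne_bot h, MM_ne_top h]
        · simp [(bot_ne_top' h).symm] }
    (by
      intro I J hIJ
      rcases ideal_cases h I with rfl | rfl | rfl <;> rcases ideal_cases h J with rfl | rfl | rfl <;>
        simp_all [le_bot_iff, top_le_iff, MM_ne_bot h, MM_ne_top h, (bot_ne_top' h).symm,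
          bot_ne_top' h] <;> decide)
    (by
      intro j k hjk
      fin_cases j <;> fin_cases k <;>
        simp_all [MM_ne_bot h, MM_ne_top h, (bot_ne_top' h).symm] <;>
        first
          | exact bot_le
          | exact le_top
          | exact le_refl _
          | exact absurd hjk (by decide))

lemma psi_bot : psi h ⊥ = 0 := by simp [psi, Equiv.toOrderIso]; rfl
lemma psi_top : psi h ⊤ = 2 := by simp [psi, Equiv.toOrderIso, (bot_ne_top' h).symm]; decide
lemma psi_MM : psi h (MM h) = 1 := by simp [psi, Equiv.toOrderIso, MM_ne_bot h, MM_ne_top h]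

lemma psi_prime_iff (I : Ideal A) : I.IsPrime ↔ psi h I = 1 := by
  rw [prime_iff h, ← psi_MM h]
  exact ⟨fun hh => hh ▸ rfl, fun hh => (psi h).injective hh⟩

lemma psi_top_iff (I : Ideal A) : I = ⊤ ↔ psi h I = 2 := by
  rw [← psi_top h]
  exact ⟨fun hh => hh ▸ rfl, fun hh => (psi h).injective hh⟩

end OneIdeal

/-! ### Auxiliary: ideals of products and transport along ring equivs -/

def idealProdOrderIso (A B : Type*) [CommRing A] [CommRing B] :
    Ideal (A × B) ≃o Ideal A × Ideal B :=
  Equiv.toOrderIso Ideal.idealProdEquiv.toEquiv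
    (fun _ _ hIJ => ⟨Ideal.map_mono hIJ, Ideal.map_mono hIJ⟩)
    (fun p q hpq => Ideal.idealProdEquiv.symm.monotone hpq)

@[simp] lemma idealProdOrderIso_apply {A B : Type*} [CommRing A] [CommRing B]
    (I : Ideal (A × B)) : idealProdOrderIso A B I = Ideal.idealProdEquiv I := rfl

lemma idealProdEquiv_top_iff {A B : Type*} [CommRing A] [CommRing B] (I : Ideal (A × B)) :
    I = ⊤ ↔ (Ideal.idealProdEquiv I).1 = ⊤ ∧ (Ideal.idealProdEquiv I).2 = ⊤ := by
  constructor
  · rintro rfl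
    constructor <;> simp [Ideal.idealProdEquiv, Ideal.map_top]
  · rintro ⟨h1, h2⟩
    have h3 : Ideal.idealProdEquiv I = (⊤, ⊤) := Prod.ext h1 h2
    have h4 := congrArg Ideal.idealProdEquiv.symm h3
    rwa [OrderIso.symm_apply_apply, Ideal.idealProdEquiv_symm_apply, Ideal.prod_top_top] at h4

lemma isPrime_prodEquiv {A B : Type*} [CommRing A] [CommRing B] (I : Ideal (A × B)) :
    I.IsPrime ↔ ((Ideal.idealProdEquiv I).1.IsPrime ∧ (Ideal.idealProdEquiv I).2 = ⊤) ∨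
      ((Ideal.idealProdEquiv I).1 = ⊤ ∧ (Ideal.idealProdEquiv I).2.IsPrime) := by
  rw [Ideal.ideal_prod_prime]
  constructor
  · rintro (⟨p, hp, rfl⟩ | ⟨p, hp, rfl⟩)
    · left
      rw [← Ideal.idealProdEquiv_symm_apply, OrderIso.apply_symm_apply]
      exact ⟨hp, rfl⟩
    · right
      rw [← Ideal.idealProdEquiv_symm_apply, OrderIso.apply_symm_apply]
      exact ⟨rfl, hp⟩
  · have hI : I = Ideal.prod (Ideal.idealProdEquiv I).1 (Ideal.idealProdEquiv I).2 := by
      rw [← Ideal.idealProdEquiv_symm_apply, Prod.mk.eta, OrderIso.symm_apply_apply]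
    rintro (⟨hp, h2⟩ | ⟨h1, hp⟩)
    · exact Or.inl ⟨_, hp, by conv_lhs => rw [hI, h2]⟩
    · exact Or.inr ⟨_, hp, by conv_lhs => rw [hI, h1]⟩

def prodCongrOI {α β γ δ : Type*} [Preorder α] [Preorder β] [Preorder γ] [Preorder δ]
    (f : α ≃o β) (g : γ ≃o δ) : α × γ ≃o β × δ :=
  Equiv.toOrderIso (f.toEquiv.prodCongr g.toEquiv)
    (fun _ _ hh => ⟨f.monotone hh.1, g.monotone hh.2⟩)
    (fun _ _ hh => ⟨f.symm.monotone hh.1, g.symm.monotone hh.2⟩)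

@[simp] lemma prodCongrOI_apply {α β γ δ : Type*} [Preorder α] [Preorder β] [Preorder γ]
    [Preorder δ] (f : α ≃o β) (g : γ ≃o δ) (x : α × γ) :
    prodCongrOI f g x = (f x.1, g x.2) := rfl

noncomputable def comapOrderIso {R S : Type*} [CommRing R] [CommRing S] (e : R ≃+* S) :
    Ideal R ≃o Ideal S :=
  Ideal.relIsoOfBijective (e.symm : S →+* R) e.symm.bijective

@[simp] lemma comapOrderIso_apply {R S : Type*} [CommRing R] [CommRing S] (e : R ≃+* S)
    (I : Ideal R) : comapOrderIso e I = Ideal.comap (e.symm : S →+* R) I := rfl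

lemma comapOrderIso_prime_iff {R S : Type*} [CommRing R] [CommRing S] (e : R ≃+* S)
    (I : Ideal R) : I.IsPrime ↔ (comapOrderIso e I).IsPrime := by
  constructor
  · intro hp
    exact Ideal.comap_isPrime _ _
  · intro hp
    have := Ideal.comap_isPrime (e : R →+* S) (comapOrderIso e I)
    rwa [comapOrderIso_apply, Ideal.comap_comap, show (e.symm : S →+* R).comp (e : R →+* S)
      = RingHom.id R from by ext x; simp, Ideal.comap_id] at this

/-! ### Auxiliary: the structure map for the three-factor situation -/

section Main

variable {R R₁ R₂ R₃ : Type*} [CommRing R] [CommRing R₁] [CommRing R₂] [CommRing R₃]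
  (h₁ : ∃! I : Ideal R₁, I ≠ ⊥ ∧ I ≠ ⊤) (h₂ : ∃! I : Ideal R₂, I ≠ ⊥ ∧ I ≠ ⊤)
  (h₃ : ∃! I : Ideal R₃, I ≠ ⊥ ∧ I ≠ ⊤) (e : R ≃+* (R₁ × R₂ × R₃))

noncomputable def Phi : Ideal R ≃o F3 :=
  (comapOrderIso e).trans ((idealProdOrderIso R₁ (R₂ × R₃)).trans
    (prodCongrOI (psi h₁) ((idealProdOrderIso R₂ R₃).trans (prodCongrOI (psi h₂) (psi h₃)))))

lemma Phi_prime_iff (I : Ideal R) :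
    I.IsPrime ↔ (Phi h₁ h₂ h₃ e I = (1,2,2) ∨ Phi h₁ h₂ h₃ e I = (2,1,2) ∨
      Phi h₁ h₂ h₃ e I = (2,2,1)) := by
  have hPhi : Phi h₁ h₂ h₃ e I =
      (psi h₁ (Ideal.idealProdEquiv (comapOrderIso e I)).1,
       psi h₂ (Ideal.idealProdEquiv (Ideal.idealProdEquiv (comapOrderIso e I)).2).1,
       psi h₃ (Ideal.idealProdEquiv (Ideal.idealProdEquiv (comapOrderIso e I)).2).2) := rfl
  rw [comapOrderIso_prime_iff e, isPrime_prodEquiv,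
    isPrime_prodEquiv ((Ideal.idealProdEquiv (comapOrderIso e I)).2),
    idealProdEquiv_top_iff ((Ideal.idealProdEquiv (comapOrderIso e I)).2),
    psi_prime_iff h₁, psi_top_iff h₁, psi_prime_iff h₂, psi_top_iff h₂,
    psi_prime_iff h₃, psi_top_iff h₃, hPhi]
  simp only [Prod.mk.injEq]
  tauto

noncomputable def phiV : PISVertex R ≃ V0 :=
  Equiv.subtypeEquiv (Phi h₁ h₂ h₃ e).toEquiv (by
    intro I
    have hbiff : I = ⊥ ↔ Phi h₁ h₂ h₃ e I = ⊥ := by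
      rw [← (Phi h₁ h₂ h₃ e).map_bot]
      exact ⟨fun hh => hh ▸ rfl, fun hh => (Phi h₁ h₂ h₃ e).injective hh⟩
    have htiff : I = ⊤ ↔ Phi h₁ h₂ h₃ e I = ⊤ := by
      rw [← (Phi h₁ h₂ h₃ e).map_top]
      exact ⟨fun hh => hh ▸ rfl, fun hh => (Phi h₁ h₂ h₃ e).injective hh⟩
    exact and_congr (not_congr hbiff) (not_congr htiff))

noncomputable def phiG : PIS R ≃g G0 where
  toEquiv := phiV h₁ h₂ h₃ e
  map_rel_iff' := by
    intro a b
    show G0.Adj _ _ ↔ (PIS R).Adj a b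
    show adj0 (Phi h₁ h₂ h₃ e a.1) (Phi h₁ h₂ h₃ e b.1) ↔ _
    unfold adj0
    rw [← (Phi h₁ h₂ h₃ e).map_sup]
    constructor
    · rintro ⟨hne, hsup⟩
      refine ⟨fun hh => hne (by rw [hh]), ?_⟩
      rw [Submodule.add_eq_sup, Phi_prime_iff h₁ h₂ h₃ e]
      exact hsup
    · rintro ⟨hne, hprime⟩
      refine ⟨fun hh => hne (Subtype.ext ((Phi h₁ h₂ h₃ e).injective hh)), ?_⟩
      rw [Submodule.add_eq_sup, Phi_prime_iff h₁ h₂ h₃ e] at hprime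
      exact hprime

end Main

/-- If `R` is isomorphic to a product of three rings each having exactly one nonzero
proper ideal, then the metric dimension of `PIS R` equals 5. -/
theorem metricDim_PIS_three_factors {R R₁ R₂ R₃ : Type*} [CommRing R]
    [CommRing R₁] [CommRing R₂] [CommRing R₃]
    (h₁ : ∃! I : Ideal R₁, I ≠ ⊥ ∧ I ≠ ⊤) (h₂ : ∃! I : Ideal R₂, I ≠ ⊥ ∧ I ≠ ⊤)
    (h₃ : ∃! I : Ideal R₃, I ≠ ⊥ ∧ I ≠ ⊤)
    (e : R ≃+* (R₁ × R₂ × R₃)) :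
    metricDim (PIS R) = 5 := by
  rw [metricDim_iso_eq (phiG h₁ h₂ h₃ e), metricDim_G0]
end
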